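/- arXiv:2406.15201 — 6 statements merged into one kernel-verified Lean document; each statement's English description precedes it below -/
import Mathlib

section
/- For every real number w and every real number x, one has exp(i·w·sin(x)) = ∑_{k ∈ ℤ} J_k(w)·exp(i·k·x), where the series converges (as a Fourier series of the left-hand side, with absolute convergence of the series of coefficients times e^{ikx} for each x). -/
open MeasureTheory Filter Set
open scoped Topology
open Complex Real

/-- Bessel function of the first kind of integer order `n`, defined via the integral
`J_n(x) = (1/(2π)) ∫_{-π}^{π} exp(i(x sin u − n u)) du` (whose value is real). -/
noncomputable def besselJ (n : ℤ) (x : ℝ) : ℝ :=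
  ((2 * Real.pi : ℂ)⁻¹ *
    ∫ u in (-Real.pi)..Real.pi,
      Complex.exp (Complex.I * ((x : ℂ) * (Real.sin u : ℂ) - (n : ℂ) * (u : ℂ)))).re

noncomputable def JAg (w : ℝ) (u : ℝ) : ℂ := Complex.exp (Complex.I * w * Real.sin u)

lemma JAg_per (w : ℝ) : Function.Periodic (JAg w) (2 * π) := by
  intro u; simp [JAg, Real.sin_add_two_pi]

lemma JAg_cont (w : ℝ) : Continuous (JAg w) := by
  unfold JAg; fun_prop

noncomputable def JAF (w : ℝ) : C(AddCircle (2 * π), ℂ) :=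
  ⟨(JAg_per w).lift, by
    rw [isQuotientMap_quotient_mk'.continuous_iff]
    exact JAg_cont w⟩

lemma fact_pos : Fact (0 < 2 * π) := ⟨by positivity⟩

lemma JAcoeff (w : ℝ) (n : ℤ) :
    haveI := fact_pos
    fourierCoeff (⇑(JAF w)) n =
      (2 * π : ℂ)⁻¹ * ∫ u in (-π)..π,
        Complex.exp (Complex.I * ((w : ℂ) * (Real.sin u : ℂ) - (n : ℂ) * (u : ℂ))) := by
  haveI := fact_pos
  rw [fourierCoeff_eq_intervalIntegral _ n (-π)]
  have h1 : -π + 2 * π = π := by ring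
  rw [h1]
  rw [intervalIntegral.integral_congr (g := fun u : ℝ =>
      Complex.exp (Complex.I * ((w : ℂ) * (Real.sin u : ℂ) - (n : ℂ) * (u : ℂ))))]
  · rw [real_smul, one_div]
    push_cast
    ring
  · intro u _
    show fourier (-n) (u : AddCircle (2 * π)) • JAF w u = _
    rw [fourier_coe_apply]
    show _ * JAg w u = _
    rw [JAg, ← Complex.exp_add]
    congr 1
    have hπ : (π : ℂ) ≠ 0 := by
      simpa using Real.pi_ne_zero
    push_cast
    field_simp
    ring

lemma bessel_eq_coeff (w : ℝ) (n : ℤ) :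
    haveI := fact_pos
    ((besselJ n w : ℝ) : ℂ) = fourierCoeff (⇑(JAF w)) n := by
  haveI := fact_pos
  rw [JAcoeff, besselJ]
  set c : ℂ := (2 * π : ℂ)⁻¹ * ∫ u in (-π)..π,
        Complex.exp (Complex.I * ((w : ℂ) * (Real.sin u : ℂ) - (n : ℂ) * (u : ℂ))) with hc
  suffices h : (starRingEnd ℂ) c = c by
    exact Complex.conj_eq_iff_re.mp h
  have hint : IntervalIntegrable (fun u : ℝ =>
      Complex.exp (Complex.I * ((w : ℂ) * (Real.sin u : ℂ) - (n : ℂ) * (u : ℂ)))) volume (-π) π :=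
    (by fun_prop : Continuous fun u : ℝ =>
      Complex.exp (Complex.I * ((w : ℂ) * (Real.sin u : ℂ) - (n : ℂ) * (u : ℂ)))).intervalIntegrable _ _
  have hcj := ContinuousLinearMap.intervalIntegral_comp_comm
    ((Complex.conjLIE : ℂ ≃ₗᵢ[ℝ] ℂ).toLinearIsometry.toContinuousLinearMap) hint
  simp only [LinearIsometry.coe_toContinuousLinearMap, LinearIsometryEquiv.coe_toLinearIsometry,
    Complex.conjLIE_apply] at hcj
  rw [hc, map_mul, ← hcj]
  have h2 : ∀ u : ℝ, (starRingEnd ℂ) (Complex.exp (Complex.I * ((w : ℂ) * (Real.sin u : ℂ) - (n : ℂ) * (u : ℂ))))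
      = Complex.exp (Complex.I * ((w : ℂ) * (Real.sin (-u) : ℂ) - (n : ℂ) * ((-u : ℝ) : ℂ))) := by
    intro u
    rw [← Complex.exp_conj]
    congr 1
    simp only [map_mul, map_sub, Complex.conj_I, Complex.conj_ofReal, Real.sin_neg, map_intCast]
    push_cast
    ring
  congr 1
  · simp only [map_inv₀, map_mul, map_ofNat, Complex.conj_ofReal]
  · have h3 := intervalIntegral.integral_comp_neg (a := (-π : ℝ)) (b := π)
      (f := fun v : ℝ => Complex.exp (Complex.I * ((w : ℂ) * (Real.sin v : ℂ) - (n : ℂ) * (v : ℂ))))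
    rw [neg_neg] at h3
    rw [intervalIntegral.integral_congr (g := fun u : ℝ =>
        Complex.exp (Complex.I * ((w : ℂ) * (Real.sin (-u) : ℂ) - (n : ℂ) * ((-u : ℝ) : ℂ))))
      (fun u _ => h2 u), h3]

lemma npp : (-π : ℝ) < π := by linarith [Real.pi_pos]

lemma coeffOn_eq (f : ℝ → ℂ) (n : ℤ) :
    fourierCoeffOn npp f n =
      (2 * π : ℂ)⁻¹ * ∫ u in (-π)..π, Complex.exp (-(Complex.I * n * u)) * f u := by
  rw [fourierCoeffOn_eq_integral]
  rw [intervalIntegral.integral_congr (g := fun u : ℝ =>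
      Complex.exp (-(Complex.I * n * u)) * f u)]
  · rw [real_smul, one_div]
    push_cast
    ring_nf
  · intro u _
    show fourier (-n) (u : AddCircle (π - -π)) • f u = _
    rw [fourier_coe_apply]
    rw [smul_eq_mul]
    congr 2
    have hπ : (π : ℂ) ≠ 0 := by simpa using Real.pi_ne_zero
    push_cast
    rw [div_eq_iff (by simpa using Real.pi_ne_zero : ((π:ℂ) - -π) ≠ 0)]
    ring

lemma coeffOn_norm_le (f : ℝ → ℂ) (n : ℤ) {M : ℝ} (hM : ∀ u, ‖f u‖ ≤ M) :
    ‖fourierCoeffOn npp f n‖ ≤ M := by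
  rw [coeffOn_eq]
  have h0 : (0:ℝ) ≤ M := le_trans (norm_nonneg _) (hM 0)
  have hb : ∀ u ∈ Set.uIoc (-π) π, ‖Complex.exp (-(Complex.I * n * u)) * f u‖ ≤ M := by
    intro u _
    rw [norm_mul]
    have h1 : ‖Complex.exp (-(Complex.I * (n:ℂ) * (u:ℝ)))‖ = 1 := by
      simp [Complex.norm_exp]
    rw [h1, one_mul]
    exact hM u
  have := intervalIntegral.norm_integral_le_of_norm_le_const hb
  rw [norm_mul]
  have h2 : ‖((2 * π : ℂ))⁻¹‖ = (2 * π)⁻¹ := by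
    rw [norm_inv]
    norm_num [abs_of_pos Real.pi_pos]
  calc ‖((2*π:ℂ))⁻¹‖ * ‖∫ u in (-π)..π, Complex.exp (-(Complex.I * n * u)) * f u‖
      ≤ (2*π)⁻¹ * (M * |π - -π|) := by
        rw [h2]
        exact mul_le_mul_of_nonneg_left this (by positivity)
    _ = M := by
        rw [abs_of_pos (by linarith [Real.pi_pos] : (0:ℝ) < π - -π),
          show π - -π = 2*π from by ring, mul_comm M, ← mul_assoc,
          inv_mul_cancel₀ (by positivity : (2*π:ℝ) ≠ 0), one_mul]

lemma coeffOn_deriv (f f' : ℝ → ℂ) {n : ℤ} (hn : n ≠ 0)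
    (hf : ∀ u, HasDerivAt f (f' u) u) (hf' : Continuous f')
    (hbd : f π = f (-π)) :
    ‖fourierCoeffOn npp f n‖ = ‖fourierCoeffOn npp f' n‖ / |(n : ℝ)| := by
  rw [fourierCoeffOn_of_hasDerivAt npp hn (fun u _ => hf u)
    (hf'.intervalIntegrable _ _)]
  rw [hbd, sub_self, mul_zero, zero_sub]
  rw [norm_mul, norm_neg, norm_mul]
  have h1 : ‖(1:ℂ) / (-2 * π * Complex.I * n)‖ = 1 / (2 * π * |(n:ℝ)|) := by
    rw [norm_div, norm_one]
    simp [map_mul, Complex.norm_real, Complex.norm_intCast,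
      abs_of_pos Real.pi_pos]
  have h2 : ‖((π : ℝ) : ℂ) - ((-π : ℝ) : ℂ)‖ = 2 * π := by
    rw [show (((π:ℝ):ℂ) - ((-π:ℝ):ℂ)) = ((2*π:ℝ):ℂ) from by push_cast; ring, Complex.norm_real,
      Real.norm_eq_abs, abs_of_pos (by positivity)]
  have hn' : |(n:ℝ)| ≠ 0 := by
    simpa using hn
  rw [h1, h2]
  field_simp

noncomputable def JAg1 (w : ℝ) (u : ℝ) : ℂ := JAg w u * (Complex.I * w * Real.cos u)

noncomputable def JAg2 (w : ℝ) (u : ℝ) : ℂ :=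
  JAg1 w u * (Complex.I * w * Real.cos u) +
    JAg w u * (Complex.I * w * ((-Real.sin u : ℝ) : ℂ))

lemma hasDeriv_JAg (w u : ℝ) : HasDerivAt (JAg w) (JAg1 w u) u := by
  have h1 : HasDerivAt (fun v : ℝ => Complex.I * w * (Real.sin v : ℂ))
      (Complex.I * w * (Real.cos u : ℂ)) u :=
    ((Real.hasDerivAt_sin u).ofReal_comp.const_mul (Complex.I * w))
  exact h1.cexp

lemma hasDeriv_JAg1 (w u : ℝ) : HasDerivAt (JAg1 w) (JAg2 w u) u := by
  have h2 : HasDerivAt (fun v : ℝ => Complex.I * w * (Real.cos v : ℂ))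
      (Complex.I * w * ((-Real.sin u : ℝ) : ℂ)) u :=
    ((Real.hasDerivAt_cos u).ofReal_comp.const_mul (Complex.I * w))
  exact (hasDeriv_JAg w u).mul h2

lemma JAg_norm (w u : ℝ) : ‖JAg w u‖ = 1 := by
  simp [JAg, Complex.norm_exp]

lemma JAg2_norm (w u : ℝ) : ‖JAg2 w u‖ ≤ w^2 + |w| := by
  refine le_trans (norm_add_le _ _) ?_
  gcongr
  · simp only [JAg1, norm_mul, JAg_norm w, one_mul, Complex.norm_I, Complex.norm_real,
      Real.norm_eq_abs]
    nlinarith [mul_le_of_le_one_right (abs_nonneg w) (Real.abs_cos_le_one u), _root_.sq_abs w, mul_nonneg (abs_nonneg w) (abs_nonneg (Real.cos u))]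
  · simp only [norm_mul, JAg_norm w, one_mul, Complex.norm_I, Complex.norm_real,
      Real.norm_eq_abs, abs_neg]
    nlinarith [Real.abs_sin_le_one u, abs_nonneg w, abs_nonneg (Real.sin u)]

lemma JAg_bd (w : ℝ) : JAg w π = JAg w (-π) := by
  simp [JAg, Real.sin_pi]

lemma JAg1_bd (w : ℝ) : JAg1 w π = JAg1 w (-π) := by
  simp [JAg1, JAg, Real.sin_pi, Real.cos_pi]

lemma cont_JAg1 (w : ℝ) : Continuous (JAg1 w) := by unfold JAg1 JAg; fun_prop
lemma cont_JAg2 (w : ℝ) : Continuous (JAg2 w) := by unfold JAg2 JAg1 JAg; fun_prop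

lemma coeff_decay (w : ℝ) {n : ℤ} (hn : n ≠ 0) :
    ‖fourierCoeffOn npp (JAg w) n‖ ≤ (w^2 + |w|) / (n:ℝ)^2 := by
  rw [coeffOn_deriv (JAg w) (JAg1 w) hn (hasDeriv_JAg w) (cont_JAg1 w) (JAg_bd w),
    coeffOn_deriv (JAg1 w) (JAg2 w) hn (hasDeriv_JAg1 w) (cont_JAg2 w) (JAg1_bd w)]
  rw [div_div, ← abs_mul, ← sq, _root_.abs_of_nonneg (sq_nonneg ((n:ℝ)))]
  have hn2 : (0:ℝ) < (n:ℝ)^2 := by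
    have : (n:ℝ) ≠ 0 := by exact_mod_cast hn
    positivity
  gcongr
  exact coeffOn_norm_le _ _ (JAg2_norm w)

lemma coeff_eq_coeffOn (w : ℝ) (n : ℤ) :
    haveI := fact_pos
    fourierCoeff (⇑(JAF w)) n = fourierCoeffOn npp (JAg w) n := by
  haveI := fact_pos
  rw [JAcoeff, coeffOn_eq]
  congr 1
  apply intervalIntegral.integral_congr
  intro u _
  simp only [JAg]
  rw [← Complex.exp_add]
  congr 1
  ring

lemma coeff_summable_norm (w : ℝ) :
    haveI := fact_pos
    Summable (fun n : ℤ => ‖fourierCoeff (⇑(JAF w)) n‖) := by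
  haveI := fact_pos
  have hb : Summable (fun n : ℤ => (w^2+|w|) * (1/(n:ℝ)^2)) :=
    Summable.mul_left _ (Real.summable_one_div_int_pow.mpr (by norm_num))
  refine Summable.of_norm_bounded_eventually hb ?_
  rw [Filter.eventually_cofinite]
  apply Set.Finite.subset (Set.finite_singleton (0:ℤ))
  intro n hn
  simp only [Set.mem_setOf_eq] at hn
  simp only [Set.mem_singleton_iff]
  by_contra h0
  apply hn
  rw [Real.norm_eq_abs, _root_.abs_of_nonneg (norm_nonneg _), coeff_eq_coeffOn]
  calc ‖fourierCoeffOn npp (JAg w) n‖ ≤ (w^2 + |w|) / (n:ℝ)^2 := coeff_decay w h0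
    _ = (w^2+|w|) * (1/(n:ℝ)^2) := by ring

lemma fourier_eval (n : ℤ) (x : ℝ) :
    haveI := fact_pos
    (fourier n (x : AddCircle (2*π)) : ℂ) = Complex.exp (Complex.I * (n:ℂ) * (x:ℂ)) := by
  rw [fourier_coe_apply]
  congr 1
  have hπ : (π : ℂ) ≠ 0 := by simpa using Real.pi_ne_zero
  push_cast
  field_simp

/-- For every real `w` and `x`, `exp(i w sin x) = ∑_{k ∈ ℤ} J_k(w) e^{i k x}`, the series
converging absolutely. -/
theorem besselJ_fourier_series (w x : ℝ) :
    Summable (fun k : ℤ => ‖(besselJ k w : ℂ) * Complex.exp (Complex.I * (k : ℂ) * (x : ℂ))‖) ∧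
    HasSum (fun k : ℤ => (besselJ k w : ℂ) * Complex.exp (Complex.I * (k : ℂ) * (x : ℂ)))
      (Complex.exp (Complex.I * (w : ℂ) * (Real.sin x : ℂ))) := by
  haveI := fact_pos
  have hnorm : ∀ k : ℤ, ‖(besselJ k w : ℂ) * Complex.exp (Complex.I * (k : ℂ) * (x : ℂ))‖
      = ‖fourierCoeff (⇑(JAF w)) k‖ := by
    intro k
    rw [norm_mul, bessel_eq_coeff]
    have : ‖Complex.exp (Complex.I * (k : ℂ) * (x:ℝ))‖ = 1 := by
      simp [Complex.norm_exp]
    rw [this, mul_one]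
  constructor
  · exact (coeff_summable_norm w).congr fun k => (hnorm k).symm
  · have hsum : Summable (fourierCoeff (⇑(JAF w))) :=
      Summable.of_norm (coeff_summable_norm w)
    have h := has_pointwise_sum_fourier_series_of_summable hsum (x : AddCircle (2*π))
    have hfx : JAF w (x : AddCircle (2*π)) = Complex.exp (Complex.I * (w : ℂ) * (Real.sin x : ℂ)) := rfl
    rw [hfx] at h
    refine h.congr_fun fun k => ?_
    rw [smul_eq_mul, bessel_eq_coeff, fourier_eval]
end

section
/- There exists a constant C > 0 (one may take C = π/√6) such that for every real number w, ∑_{k ∈ ℤ, k ≠ 0} |J_k(w)| ≤ C·|w|. -/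
open MeasureTheory Filter Set
open scoped Topology

open intervalIntegral Complex Real

private instance : Fact (0 < 2 * Real.pi) := ⟨by positivity⟩

private noncomputable def gfun (w : ℝ) (u : ℝ) : ℂ :=
  Complex.I * w * Real.cos u * Complex.exp (Complex.I * ((w : ℂ) * (Real.sin u : ℂ)))

private lemma g_periodic (w : ℝ) : Function.Periodic (gfun w) (2 * Real.pi) := by
  intro u
  simp [gfun, Real.cos_add_two_pi, Real.sin_add_two_pi]

private noncomputable def Gc (w : ℝ) : C(AddCircle (2 * Real.pi), ℂ) :=
  ⟨(g_periodic w).lift, by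
    have : Continuous (gfun w) := by unfold gfun; fun_prop
    exact this.quotient_liftOn' _⟩

private lemma Gc_coe (w : ℝ) (x : ℝ) : Gc w (x : AddCircle (2 * Real.pi)) = gfun w x :=
  (g_periodic w).lift_coe x

private noncomputable def zint (w : ℝ) (k : ℤ) : ℂ :=
  (2 * Real.pi : ℂ)⁻¹ *
    ∫ u in (-Real.pi)..Real.pi,
      Complex.exp (Complex.I * ((w : ℂ) * (Real.sin u : ℂ) - (k : ℂ) * (u : ℂ)))

private noncomputable def phi (w : ℝ) (k : ℤ) (v : ℝ) : ℂ :=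
  Complex.exp (Complex.I * ((w * Real.sin v - k * v : ℝ) : ℂ))

private lemma phi_cont (w : ℝ) (k : ℤ) : Continuous (phi w k) := by
  unfold phi; fun_prop

private lemma phi_deriv (w : ℝ) (k : ℤ) (u : ℝ) :
    HasDerivAt (phi w k)
      (Complex.I * ((w * Real.cos u - k : ℝ) : ℂ) * phi w k u) u := by
  have h1 : HasDerivAt (fun v : ℝ => (w * Real.sin v - k * v : ℝ))
      (w * Real.cos u - k) u := by
    exact (((Real.hasDerivAt_sin u).const_mul w).sub
      ((hasDerivAt_id u).const_mul (k : ℝ))).congr_deriv (by ring)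
  have h2 := (h1.ofReal_comp.const_mul Complex.I).cexp
  unfold phi
  convert h2 using 1
  ring

private lemma besselJ_ibp (w : ℝ) (k : ℤ) :
    (∫ u in (-Real.pi)..Real.pi,
        Complex.exp (-(Complex.I * k * u)) * (Complex.I * w * Real.cos u *
          Complex.exp (Complex.I * ((w : ℂ) * (Real.sin u : ℂ)))))
      = Complex.I * k *
        ∫ u in (-Real.pi)..Real.pi,
          Complex.exp (Complex.I * ((w : ℂ) * (Real.sin u : ℂ) - (k : ℂ) * (u : ℂ))) := by
  have hc := phi_cont w k
  have hint : (∫ u in (-Real.pi)..Real.pi,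
      Complex.I * ((w * Real.cos u - k : ℝ) : ℂ) * phi w k u)
      = phi w k Real.pi - phi w k (-Real.pi) := by
    refine integral_eq_sub_of_hasDerivAt (fun u _ => phi_deriv w k u) ?_
    exact (by fun_prop : Continuous fun u : ℝ =>
      Complex.I * ((w * Real.cos u - k : ℝ) : ℂ) * phi w k u).intervalIntegrable _ _
  have hbd : phi w k Real.pi = phi w k (-Real.pi) := by
    unfold phi
    simp only [Real.sin_pi, Real.sin_neg, mul_zero, neg_zero]
    rw [Complex.exp_eq_exp_iff_exists_int]
    exact ⟨-k, by push_cast; ring⟩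
  rw [hbd, sub_self] at hint
  have hsplit : (∫ u in (-Real.pi)..Real.pi, Complex.I * ((w * Real.cos u : ℝ) : ℂ) * phi w k u)
      = (∫ u in (-Real.pi)..Real.pi, Complex.I * ((w * Real.cos u - k : ℝ) : ℂ) * phi w k u)
        + ∫ u in (-Real.pi)..Real.pi, Complex.I * k * phi w k u := by
    rw [← intervalIntegral.integral_add
      ((by fun_prop : Continuous fun u : ℝ =>
        Complex.I * ((w * Real.cos u - k : ℝ) : ℂ) * phi w k u).intervalIntegrable _ _)
      ((by fun_prop : Continuous fun u : ℝ =>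
        Complex.I * (k : ℂ) * phi w k u).intervalIntegrable _ _)]
    refine intervalIntegral.integral_congr fun u _ => ?_
    push_cast
    ring
  rw [hint, zero_add, intervalIntegral.integral_const_mul] at hsplit
  have e1 : (∫ u in (-Real.pi)..Real.pi,
        Complex.exp (-(Complex.I * k * u)) * (Complex.I * w * Real.cos u *
          Complex.exp (Complex.I * ((w : ℂ) * (Real.sin u : ℂ)))))
      = ∫ u in (-Real.pi)..Real.pi, Complex.I * ((w * Real.cos u : ℝ) : ℂ) * phi w k u := by
    refine intervalIntegral.integral_congr fun u _ => ?_
    have he : Complex.exp (-(Complex.I * k * u)) *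
        Complex.exp (Complex.I * ((w : ℂ) * (Real.sin u : ℂ))) = phi w k u := by
      rw [phi, ← Complex.exp_add]
      congr 1
      push_cast
      ring
    calc Complex.exp (-(Complex.I * k * u)) * (Complex.I * w * Real.cos u *
          Complex.exp (Complex.I * ((w : ℂ) * (Real.sin u : ℂ))))
        = (Complex.I * w * Real.cos u) * (Complex.exp (-(Complex.I * k * u)) *
          Complex.exp (Complex.I * ((w : ℂ) * (Real.sin u : ℂ)))) := by ring
      _ = Complex.I * ((w * Real.cos u : ℝ) : ℂ) * phi w k u := by rw [he]; push_cast; ring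
  have e2 : (∫ u in (-Real.pi)..Real.pi, phi w k u)
      = ∫ u in (-Real.pi)..Real.pi,
          Complex.exp (Complex.I * ((w : ℂ) * (Real.sin u : ℂ) - (k : ℂ) * (u : ℂ))) := by
    refine intervalIntegral.integral_congr fun u _ => ?_
    rw [phi]
    congr 1
    push_cast
    ring
  rw [e1, hsplit, e2]

private lemma fourierCoeff_Gc (w : ℝ) (k : ℤ) :
    fourierCoeff (⇑(Gc w)) k = Complex.I * k * zint w k := by
  rw [fourierCoeff_eq_intervalIntegral (⇑(Gc w)) k (-Real.pi)]
  have hb : -Real.pi + 2 * Real.pi = Real.pi := by ring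
  rw [hb]
  have h2pi : (2 * Real.pi : ℂ) ≠ 0 := by
    simp [Real.pi_ne_zero]
  have hint : (∫ x in (-Real.pi)..Real.pi,
      (fourier (-k) (x : AddCircle (2 * Real.pi)) : ℂ) • Gc w (x : AddCircle (2 * Real.pi)))
      = ∫ x in (-Real.pi)..Real.pi, Complex.exp (-(Complex.I * k * x)) * gfun w x := by
    refine intervalIntegral.integral_congr fun x _ => ?_
    rw [smul_eq_mul, Gc_coe, fourier_coe_apply]
    congr 1
    push_cast
    congr 1
    rw [div_eq_iff h2pi]
    ring
  unfold gfun at hint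
  rw [hint, besselJ_ibp w k, zint]
  rw [Complex.real_smul]
  have h2pi' : ((2 * Real.pi : ℝ) : ℂ) ≠ 0 := by push_cast; exact h2pi
  push_cast
  field_simp

private lemma gc_norm_sq (w : ℝ) (x : ℝ) :
    ‖Gc w (x : AddCircle (2 * Real.pi))‖ ^ 2 = w ^ 2 * Real.cos x ^ 2 := by
  rw [Gc_coe]
  simp only [gfun, norm_mul, Complex.norm_I, one_mul, Complex.norm_real, Complex.norm_exp]
  simp [mul_pow, sq_abs, Complex.normSq_eq_norm_sq, Complex.norm_exp]

private lemma integral_norm_Gc (w : ℝ) :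
    ∫ t : AddCircle (2 * Real.pi), ‖Gc w t‖ ^ 2 ∂AddCircle.haarAddCircle = w ^ 2 / 2 := by
  have hπ : Real.pi ≠ 0 := Real.pi_ne_zero
  have h1 : (∫ t : AddCircle (2 * Real.pi), ‖Gc w t‖ ^ 2)
      = 2 * Real.pi * ∫ t : AddCircle (2 * Real.pi), ‖Gc w t‖ ^ 2 ∂AddCircle.haarAddCircle := by
    rw [AddCircle.volume_eq_smul_haarAddCircle, MeasureTheory.integral_smul_measure,
      ENNReal.toReal_ofReal (by positivity)]
    simp [smul_eq_mul]
  have h0 : (∫ x in (-Real.pi)..(-Real.pi + 2 * Real.pi), ‖Gc w (x : AddCircle (2*Real.pi))‖ ^ 2)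
      = ∫ t : AddCircle (2 * Real.pi), ‖Gc w t‖ ^ 2 :=
    AddCircle.intervalIntegral_preimage (2 * Real.pi) (-Real.pi)
      (fun t : AddCircle (2 * Real.pi) => ‖Gc w t‖ ^ 2)
  have hb : -Real.pi + 2 * Real.pi = Real.pi := by ring
  rw [hb] at h0
  have h2 : (∫ x in (-Real.pi)..Real.pi, ‖Gc w (x : AddCircle (2*Real.pi))‖ ^ 2)
      = w ^ 2 * Real.pi := by
    rw [intervalIntegral.integral_congr (fun x _ => gc_norm_sq w x),
      intervalIntegral.integral_const_mul, integral_cos_sq]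
    simp [Real.sin_pi]
  rw [h2] at h0
  rw [← h0] at h1
  have h3 : 2 * Real.pi * (w ^ 2 / 2) = 2 * Real.pi
      * ∫ t : AddCircle (2 * Real.pi), ‖Gc w t‖ ^ 2 ∂AddCircle.haarAddCircle := by
    rw [← h1]; ring
  exact (mul_left_cancel₀ (by positivity) h3).symm

private lemma parseval_Gc (w : ℝ) :
    Summable (fun k : ℤ => ‖fourierCoeff (⇑(Gc w)) k‖ ^ 2) ∧
    ∑' k : ℤ, ‖fourierCoeff (⇑(Gc w)) k‖ ^ 2 = w ^ 2 / 2 := by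
  set FLp := ContinuousMap.toLp (E := ℂ) 2 AddCircle.haarAddCircle ℂ (Gc w) with hFLp
  have hcoeff : ∀ k : ℤ, fourierCoeff (FLp : AddCircle (2 * Real.pi) → ℂ) k
      = fourierCoeff (⇑(Gc w)) k := fun k => fourierCoeff_toLp (Gc w) k
  constructor
  · have hmem : Memℓp (⇑(fourierBasis.repr FLp)) 2 := (fourierBasis.repr FLp).property
    have hs := (memℓp_gen_iff (by norm_num : (0:ℝ) < (2 : ENNReal).toReal)).1 hmem
    refine hs.congr fun k => ?_
    rw [fourierBasis_repr, hcoeff]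
    norm_num
  · rw [← funext hcoeff]
    rw [tsum_sq_fourierCoeff FLp, ← integral_norm_Gc w]
    refine integral_congr_ae ?_
    filter_upwards [ContinuousMap.coeFn_toLp (p := 2) (𝕜 := ℂ)
      AddCircle.haarAddCircle (Gc w)] with t ht
    rw [← hFLp] at ht
    rw [ht]

private lemma abs_besselJ_le (w : ℝ) (k : ℤ) : |besselJ k w| ≤ ‖zint w k‖ :=
  Complex.abs_re_le_norm (zint w k)

private lemma norm_fourierCoeff_Gc (w : ℝ) (k : ℤ) :
    ‖fourierCoeff (⇑(Gc w)) k‖ = |(k : ℝ)| * ‖zint w k‖ := by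
  rw [fourierCoeff_Gc, norm_mul, norm_mul, Complex.norm_I, one_mul]
  norm_num

/-- There is a constant `C > 0` (e.g. `C = π/√6`) such that for every real `w`,
`∑_{k ∈ ℤ, k ≠ 0} |J_k(w)| ≤ C |w|`. -/
theorem sum_abs_besselJ_le : ∃ C : ℝ, 0 < C ∧ ∀ w : ℝ,
    Summable (fun k : {k : ℤ // k ≠ 0} => |besselJ (k : ℤ) w|) ∧
    ∑' k : {k : ℤ // k ≠ 0}, |besselJ (k : ℤ) w| ≤ C * |w| := by
  have hsum2 : Summable (fun k : {k : ℤ // k ≠ 0} => (1 : ℝ) / ((k : ℤ) : ℝ) ^ 2) := by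
    have : Summable (fun k : ℤ => (1 : ℝ) / (k : ℝ) ^ 2) :=
      summable_one_div_int_pow.mpr one_lt_two
    exact this.subtype _
  set S : ℝ := ∑' k : {k : ℤ // k ≠ 0}, (1 : ℝ) / ((k : ℤ) : ℝ) ^ 2 with hS
  have hSpos : 0 < S := by
    have h1 : (1 : ℝ) / ((((⟨1, one_ne_zero⟩ : {k : ℤ // k ≠ 0}) : ℤ)) : ℝ) ^ 2 ≤ S :=
      Summable.le_tsum hsum2 _ (fun j _ => by positivity)
    norm_num at h1
    linarith
  refine ⟨Real.sqrt S / Real.sqrt 2,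
    div_pos (Real.sqrt_pos.mpr hSpos) (Real.sqrt_pos.mpr two_pos), fun w => ?_⟩
  obtain ⟨hPsum, hPval⟩ := parseval_Gc w
  -- the squared-norm sequence over ℤ
  set F : ℤ → ℝ := fun k => ‖fourierCoeff (⇑(Gc w)) k‖ ^ 2 with hF
  have hFnonneg : ∀ k, 0 ≤ F k := fun k => by positivity
  have key : ∀ s : Finset {k : ℤ // k ≠ 0},
      ∑ k ∈ s, |besselJ (k : ℤ) w| ≤ Real.sqrt S / Real.sqrt 2 * |w| := by
    intro s
    have step1 : ∑ k ∈ s, |besselJ (k : ℤ) w| ≤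
        ∑ k ∈ s, (1 / |((k : ℤ) : ℝ)|) * (|((k : ℤ) : ℝ)| * ‖zint w (k : ℤ)‖) := by
      refine Finset.sum_le_sum fun k _ => ?_
      have hk : ((k : ℤ) : ℝ) ≠ 0 := Int.cast_ne_zero.mpr k.2
      have : (1 / |((k : ℤ) : ℝ)|) * (|((k : ℤ) : ℝ)| * ‖zint w (k : ℤ)‖)
          = ‖zint w (k : ℤ)‖ := by
        field_simp
      rw [this]
      exact abs_besselJ_le w k
    have step2 := Real.sum_mul_le_sqrt_mul_sqrt s
      (fun k => 1 / |((k : ℤ) : ℝ)|) (fun k => |((k : ℤ) : ℝ)| * ‖zint w (k : ℤ)‖)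
    have step3 : ∑ k ∈ s, (1 / |((k : ℤ) : ℝ)|) ^ 2 ≤ S := by
      refine le_trans (le_of_eq ?_) (Summable.sum_le_tsum s (fun j _ => by positivity) hsum2)
      refine Finset.sum_congr rfl fun k _ => ?_
      rw [div_pow, one_pow, _root_.sq_abs]
    have step4 : ∑ k ∈ s, (|((k : ℤ) : ℝ)| * ‖zint w (k : ℤ)‖) ^ 2 ≤ w ^ 2 / 2 := by
      have hmap : ∑ k ∈ s, (|((k : ℤ) : ℝ)| * ‖zint w (k : ℤ)‖) ^ 2
          = ∑ j ∈ s.map ⟨Subtype.val, Subtype.val_injective⟩, F j := by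
        rw [Finset.sum_map]
        refine Finset.sum_congr rfl fun k _ => ?_
        simp only [Function.Embedding.coeFn_mk, hF]
        rw [norm_fourierCoeff_Gc]
      rw [hmap, ← hPval]
      exact Summable.sum_le_tsum _ (fun j _ => hFnonneg j) hPsum
    have hsqrt : Real.sqrt (∑ k ∈ s, (1 / |((k : ℤ) : ℝ)|) ^ 2) *
        Real.sqrt (∑ k ∈ s, (|((k : ℤ) : ℝ)| * ‖zint w (k : ℤ)‖) ^ 2)
        ≤ Real.sqrt S * Real.sqrt (w ^ 2 / 2) :=
      mul_le_mul (Real.sqrt_le_sqrt step3) (Real.sqrt_le_sqrt step4)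
        (Real.sqrt_nonneg _) (Real.sqrt_nonneg _)
    have hval : Real.sqrt (w ^ 2 / 2) = |w| / Real.sqrt 2 := by
      rw [Real.sqrt_div (sq_nonneg w), Real.sqrt_sq_eq_abs]
    calc ∑ k ∈ s, |besselJ (k : ℤ) w| ≤ _ := step1
      _ ≤ _ := step2
      _ ≤ Real.sqrt S * Real.sqrt (w ^ 2 / 2) := hsqrt
      _ = Real.sqrt S / Real.sqrt 2 * |w| := by rw [hval]; ring
  have hsummable : Summable (fun k : {k : ℤ // k ≠ 0} => |besselJ (k : ℤ) w|) :=
    summable_of_sum_le (fun k => abs_nonneg _) key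
  exact ⟨hsummable, Summable.tsum_le_of_sum_le hsummable key⟩
end

section
/- Let (a,b) ⊆ ℝ be an interval (possibly unbounded) and let f : (a,b) → ℝ be Lebesgue integrable on (a,b). Then lim_{n → ∞} ∫_a^b exp(i·f(u)·sin(n·u)) du = ∫_a^b J₀(f(u)) du. -/
open MeasureTheory Filter Set Complex
open MeasureTheory Filter Set
open scoped Topology Real ENNReal NNReal

noncomputable def W (x : ℝ) : ℂ :=
  ∫ u in (-Real.pi)..Real.pi, Complex.exp (Complex.I * x * Real.sin u)


lemma hasDerivAt_expI (t : ℝ) :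
    HasDerivAt (fun s : ℝ => Complex.exp (Complex.I * s)) (Complex.I * Complex.exp (Complex.I * t)) t := by
  have h : HasDerivAt (fun z : ℂ => Complex.exp (Complex.I * z)) (Complex.exp (Complex.I * t) * Complex.I) (t : ℂ) :=
by simpa using ((hasDerivAt_id (t : ℂ)).const_mul Complex.I).cexp
  simpa [mul_comm] using h.comp_ofReal

lemma norm_expI_sub (a b : ℝ) :
    ‖Complex.exp (Complex.I * a) - Complex.exp (Complex.I * b)‖ ≤ |a - b| := by
  have := Convex.norm_image_sub_le_of_norm_hasDerivWithin_le
    (f := fun s : ℝ => Complex.exp (Complex.I * s))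
    (f' := fun t : ℝ => Complex.I * Complex.exp (Complex.I * t)) (C := 1) (s := Set.univ)
    (fun x _ => (hasDerivAt_expI x).hasDerivWithinAt)
    (fun x _ => by simp [Complex.norm_exp]) convex_univ (Set.mem_univ b) (Set.mem_univ a)
  simpa [Real.norm_eq_abs] using this
lemma besselJ_zero_re (x : ℝ) : besselJ 0 x = ((2 * Real.pi : ℂ)⁻¹ * W x).re := by
  unfold besselJ W
  norm_num [mul_assoc]

lemma W_conj (x : ℝ) : (starRingEnd ℂ) (W x) = W x := by
  have hle : -Real.pi ≤ Real.pi := by linarith [Real.pi_pos]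
  have key : ∀ u : ℝ, (starRingEnd ℂ) (Complex.exp (Complex.I * x * Real.sin u))
      = Complex.exp (Complex.I * x * Real.sin (-u)) := by
    intro u
    rw [← Complex.exp_conj]
    congr 1
    simp only [map_mul, Complex.conj_I, Complex.conj_ofReal, Real.sin_neg, Complex.ofReal_neg]
    ring
  have h1 : (starRingEnd ℂ) (W x)
      = ∫ u in (-Real.pi)..Real.pi, (starRingEnd ℂ) (Complex.exp (Complex.I * x * Real.sin u)) := by
    unfold W
    rw [intervalIntegral.integral_of_le hle, intervalIntegral.integral_of_le hle, integral_conj]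
  rw [h1]
  simp_rw [key]
  rw [intervalIntegral.integral_comp_neg (f := fun u : ℝ => Complex.exp (Complex.I * x * Real.sin u))]
  unfold W
  norm_num

lemma W_real (x : ℝ) : ((W x).re : ℂ) = W x := by
  rw [Complex.conj_eq_iff_re.mp (W_conj x)]

lemma besselJ_zero_coe (x : ℝ) : ((besselJ 0 x : ℝ) : ℂ) = (2 * Real.pi : ℂ)⁻¹ * W x := by
  rw [besselJ_zero_re]
  have h2 : ((2 * Real.pi : ℂ)⁻¹ * W x) = (((2 * Real.pi : ℝ))⁻¹ : ℝ) * W x := by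
    push_cast; ring
  rw [h2, ← W_real x]
  push_cast
  simp
lemma continuous_g (x : ℝ) : Continuous (fun u : ℝ => Complex.exp (Complex.I * x * Real.sin u)) := by
  fun_prop

lemma norm_g_one (x u : ℝ) : ‖Complex.exp (Complex.I * x * Real.sin u)‖ = 1 := by
  rw [Complex.norm_exp]
  norm_num [Complex.mul_re]

lemma norm_g_sub (x y u : ℝ) :
    ‖Complex.exp (Complex.I * x * Real.sin u) - Complex.exp (Complex.I * y * Real.sin u)‖ ≤ |x - y| := by
  have h1 : Complex.I * x * Real.sin u = Complex.I * ((x * Real.sin u : ℝ) : ℂ) := by push_cast; ring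
  have h2 : Complex.I * y * Real.sin u = Complex.I * ((y * Real.sin u : ℝ) : ℂ) := by push_cast; ring
  rw [h1, h2]
  calc ‖_ - _‖ ≤ |x * Real.sin u - y * Real.sin u| := norm_expI_sub _ _
    _ = |x - y| * |Real.sin u| := by rw [← sub_mul, abs_mul]
    _ ≤ |x - y| * 1 := by
        gcongr; exact Real.abs_sin_le_one u
    _ = |x - y| := mul_one _

lemma norm_W_sub (x y : ℝ) : ‖W x - W y‖ ≤ |x - y| * (2 * Real.pi) := by
  unfold W
  rw [← intervalIntegral.integral_sub ((continuous_g x).intervalIntegrable _ _)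
    ((continuous_g y).intervalIntegrable _ _)]
  have := intervalIntegral.norm_integral_le_of_norm_le_const (C := |x - y|)
    (f := fun u => Complex.exp (Complex.I * x * Real.sin u) - Complex.exp (Complex.I * y * Real.sin u))
    (a := -Real.pi) (b := Real.pi) (fun u _ => norm_g_sub x y u)
  have hπ : |Real.pi - -Real.pi| = 2 * Real.pi := by
    rw [sub_neg_eq_add, _root_.abs_of_nonneg (by linarith [Real.pi_pos])]; ring
  rw [hπ] at this
  exact this

lemma W_shift (x t : ℝ) :
    ∫ u in t..(t + 2 * Real.pi), Complex.exp (Complex.I * x * Real.sin u) = W x := by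
  have hper : Function.Periodic (fun u : ℝ => Complex.exp (Complex.I * x * Real.sin u)) (2 * Real.pi) := by
    intro u; simp [Real.sin_periodic u]
  have h := hper.intervalIntegral_add_eq t (-Real.pi)
  rw [h]
  unfold W
  have hp : -Real.pi + 2 * Real.pi = Real.pi := by ring
  rw [hp]
lemma norm_two_pi_inv : ‖(2 * (Real.pi:ℂ))⁻¹‖ = (2 * Real.pi)⁻¹ := by
  rw [norm_inv, norm_mul]
  norm_num [Complex.norm_real, abs_of_pos Real.pi_pos]

lemma norm_W_le (x : ℝ) : ‖W x‖ ≤ 2 * Real.pi := by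
  unfold W
  have h := intervalIntegral.norm_integral_le_of_norm_le_const (C := 1)
    (f := fun u : ℝ => Complex.exp (Complex.I * x * Real.sin u)) (a := -Real.pi) (b := Real.pi)
    (fun u _ => le_of_eq (norm_g_one x u))
  calc ‖_‖ ≤ 1 * |Real.pi - -Real.pi| := h
    _ = 2 * Real.pi := by
        rw [one_mul, sub_neg_eq_add, _root_.abs_of_nonneg (by linarith [Real.pi_pos])]; ring

lemma besselJ_zero_norm_le_one (x : ℝ) : ‖((besselJ 0 x : ℝ) : ℂ)‖ ≤ 1 := by
  rw [besselJ_zero_coe, norm_mul, norm_two_pi_inv]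
  have := norm_W_le x
  have hπ : 0 < 2 * Real.pi := by positivity
  calc (2 * Real.pi)⁻¹ * ‖W x‖ ≤ (2 * Real.pi)⁻¹ * (2 * Real.pi) := by gcongr
    _ = 1 := inv_mul_cancel₀ (ne_of_gt hπ)

lemma besselJ_zero_lip (x y : ℝ) : |besselJ 0 x - besselJ 0 y| ≤ |x - y| := by
  rw [besselJ_zero_re, besselJ_zero_re]
  have h : ((2 * Real.pi : ℂ)⁻¹ * W x).re - ((2 * Real.pi : ℂ)⁻¹ * W y).re
      = ((2 * Real.pi : ℂ)⁻¹ * (W x - W y)).re := by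
    rw [mul_sub, Complex.sub_re]
  rw [h]
  calc |((2 * Real.pi : ℂ)⁻¹ * (W x - W y)).re|
      ≤ ‖(2 * Real.pi : ℂ)⁻¹ * (W x - W y)‖ := Complex.abs_re_le_norm _
    _ = (2 * Real.pi)⁻¹ * ‖W x - W y‖ := by rw [norm_mul, norm_two_pi_inv]
    _ ≤ (2 * Real.pi)⁻¹ * (|x - y| * (2 * Real.pi)) :=
        mul_le_mul_of_nonneg_left (norm_W_sub x y) (by positivity)
    _ = |x - y| := by field_simp

lemma besselJ_zero_zero : besselJ 0 0 = 1 := by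
  have hW : W 0 = 2 * (Real.pi:ℂ) := by
    unfold W
    have h : ∀ u : ℝ, Complex.exp (Complex.I * ((0:ℝ):ℂ) * Real.sin u) = 1 := fun u => by norm_num
    simp_rw [h]
    rw [intervalIntegral.integral_const, sub_neg_eq_add, Complex.real_smul, mul_one]
    push_cast
    ring
  have h2π : (2 * (Real.pi:ℂ)) ≠ 0 :=
    mul_ne_zero two_ne_zero (Complex.ofReal_ne_zero.mpr Real.pi_ne_zero)
  have h := besselJ_zero_coe 0
  rw [hW, inv_mul_cancel₀ h2π] at h
  exact_mod_cast h

lemma one_le_besselJ_add (x : ℝ) : 1 ≤ |besselJ 0 x| + |x| := by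
  have h := besselJ_zero_lip x 0
  rw [besselJ_zero_zero, sub_zero] at h
  obtain ⟨h1, h2⟩ := abs_le.mp h
  linarith [le_abs_self (besselJ 0 x)]

lemma continuous_besselJ_zero : Continuous (besselJ 0) := by
  have : LipschitzWith 1 (besselJ 0) := by
    apply LipschitzWith.of_dist_le_mul
    intro x y
    rw [Real.dist_eq, Real.dist_eq]
    simpa using besselJ_zero_lip x y
  exact this.continuous
lemma l1_translation {g : ℝ → ℝ} (hg : Integrable g (volume : Measure ℝ)) {ε : ℝ} (hε : 0 < ε) :
    ∃ δ > 0, ∀ d : ℝ, |d| < δ → (∫ v, |g (v + d) - g v|) ≤ ε := by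
  obtain ⟨φ, φsupp, φle, φcont, φint⟩ :=
    hg.exists_hasCompactSupport_integral_sub_le (ε := ε / 3) (by positivity)
  -- support of φ inside Icc (-R) R
  obtain ⟨r, hr⟩ := φsupp.isBounded.subset_closedBall 0
  set R : ℝ := max r 0 + 1 with hR
  have hR0 : 0 < R := by positivity
  have hsupp : tsupport φ ⊆ Icc (-R) R := by
    refine hr.trans ?_
    rw [Real.closedBall_eq_Icc]
    apply Icc_subset_Icc <;> simp [hR] <;> nlinarith [le_max_left r 0, le_max_right r 0]
  have φuc : UniformContinuous φ := φsupp.uniformContinuous_of_continuous φcont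
  set M : ℝ := 2 * R + 2 with hM
  have hM0 : 0 < M := by positivity
  obtain ⟨δ, hδ0, hδ⟩ := Metric.uniformContinuous_iff.mp φuc (ε / (3 * M)) (by positivity)
  refine ⟨min δ 1, by positivity, fun d hd => ?_⟩
  have hd1 : |d| < 1 := lt_of_lt_of_le hd (min_le_right _ _)
  have hdδ : |d| < δ := lt_of_lt_of_le hd (min_le_left _ _)
  -- integrability facts
  have hgd : Integrable (fun v => g (v + d)) volume := hg.comp_add_right d
  have hφd : Integrable (fun v => φ (v + d)) volume := φint.comp_add_right d
  have h1 : (∫ v, |g (v + d) - φ (v + d)|) ≤ ε / 3 := by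
    have heq : (∫ v, |g (v + d) - φ (v + d)|) = ∫ v, |g v - φ v| := by
      simpa using MeasureTheory.integral_add_right_eq_self (μ := volume) (fun v => |g v - φ v|) d
    rw [heq]
    simpa [Real.norm_eq_abs] using φle
  have h3 : (∫ v, |φ v - g v|) ≤ ε / 3 := by
    simp_rw [abs_sub_comm]
    simpa [Real.norm_eq_abs] using φle
  -- middle term
  have hmid_pt : ∀ v : ℝ, |φ (v + d) - φ v| ≤ (Icc (-R - 1) (R + 1)).indicator (fun _ => ε / (3 * M)) v := by
    intro v
    by_cases hv : v ∈ Icc (-R - 1) (R + 1)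
    · rw [indicator_of_mem hv]
      exact le_of_lt (by simpa [Real.dist_eq, add_sub_cancel_right] using hδ (show dist (v + d) v < δ by simpa [Real.dist_eq, add_sub_cancel_right] using hdδ))
    · rw [indicator_of_notMem hv]
      have hv1 : φ v = 0 := by
        apply image_eq_zero_of_notMem_tsupport
        intro hmem
        exact hv (Icc_subset_Icc (by linarith) (by linarith) (hsupp hmem))
      have hv2 : φ (v + d) = 0 := by
        apply image_eq_zero_of_notMem_tsupport
        intro hmem
        have h := hsupp hmem
        simp only [mem_Icc] at h hv
        rcases abs_lt.mp hd1 with ⟨hl, hu⟩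
        exact absurd ⟨by linarith [h.1], by linarith [h.2]⟩ hv
      simp [hv1, hv2]
  have hmid : (∫ v, |φ (v + d) - φ v|) ≤ ε / 3 := by
    have hind : (∫ v, (Icc (-R - 1) (R + 1)).indicator (fun _ => ε / (3 * M)) v)
        = (ε / (3 * M)) * (2 * R + 2) := by
      rw [integral_indicator measurableSet_Icc]
      simp [Real.volume_Icc]
      rw [max_eq_left (by linarith)]
      ring
    have hint1 : Integrable (fun v => |φ (v + d) - φ v|) volume := (hφd.sub φint).abs
    have hint2 : Integrable ((Icc (-R - 1) (R + 1)).indicator (fun _ => ε / (3 * M))) volume := by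
      rw [integrable_indicator_iff measurableSet_Icc]
      exact (integrableOn_const_iff).mpr (Or.inr measure_Icc_lt_top)
    calc (∫ v, |φ (v + d) - φ v|) ≤ ∫ v, (Icc (-R - 1) (R + 1)).indicator (fun _ => ε / (3 * M)) v :=
          integral_mono hint1 hint2 hmid_pt
      _ = (ε / (3 * M)) * (2 * R + 2) := hind
      _ ≤ ε / 3 := by rw [hM]; rw [div_mul_eq_mul_div, mul_comm]; rw [div_le_div_iff₀ (by positivity) (by norm_num)] <;> nlinarith
  -- combine
  have hpt : ∀ v : ℝ, |g (v + d) - g v| ≤ |g (v + d) - φ (v + d)| + |φ (v + d) - φ v| + |φ v - g v| := by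
    intro v
    calc |g (v + d) - g v| = |(g (v + d) - φ (v + d)) + (φ (v + d) - φ v) + (φ v - g v)| := by ring_nf
      _ ≤ _ := by exact (abs_add_le _ _).trans (by gcongr; exact abs_add_le _ _)
  have hint_a : Integrable (fun v => |g (v + d) - φ (v + d)|) volume := (hgd.sub hφd).abs
  have hint_b : Integrable (fun v => |φ (v + d) - φ v|) volume := (hφd.sub φint).abs
  have hint_c : Integrable (fun v => |φ v - g v|) volume := (φint.sub hg).abs
  have hint_ab : Integrable (fun v => |g (v + d) - φ (v + d)| + |φ (v + d) - φ v|) volume :=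
    hint_a.add hint_b
  calc (∫ v, |g (v + d) - g v|)
      ≤ ∫ v, (|g (v + d) - φ (v + d)| + |φ (v + d) - φ v| + |φ v - g v|) :=
        integral_mono ((hgd.sub hg).abs) (hint_ab.add hint_c) hpt
    _ = (∫ v, |g (v + d) - φ (v + d)| + |φ (v + d) - φ v|) + (∫ v, |φ v - g v|) :=
        integral_add hint_ab hint_c
    _ = (∫ v, |g (v + d) - φ (v + d)|) + (∫ v, |φ (v + d) - φ v|) + (∫ v, |φ v - g v|) := by
        rw [integral_add hint_a hint_b]
    _ ≤ ε / 3 + ε / 3 + ε / 3 := by gcongr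
    _ = ε := by ring
lemma inner_avg (c r : ℝ) :
    ∫ s in (0:ℝ)..(2 * Real.pi), Complex.exp (Complex.I * c * Real.sin (r + s)) = W c := by
  rw [intervalIntegral.integral_comp_add_left (fun t => Complex.exp (Complex.I * c * Real.sin t)) r]
  rw [add_zero]
  exact W_shift c r

lemma aesm_exp {f : ℝ → ℝ} {μ : Measure ℝ}
    (hfa : AEStronglyMeasurable f μ) {c : ℝ → ℝ} (hc : Continuous c) :
    AEStronglyMeasurable (fun u => Complex.exp (Complex.I * f u * c u)) μ := by
  apply Complex.continuous_exp.comp_aestronglyMeasurable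
  exact (aestronglyMeasurable_const.mul
    (Complex.continuous_ofReal.comp_aestronglyMeasurable hfa)).mul
    ((Complex.continuous_ofReal.comp hc).aestronglyMeasurable)

lemma prod_integrable (S : Set ℝ) (hSfin : volume S < ⊤)
    {f : ℝ → ℝ} (hfa : AEStronglyMeasurable f (volume.restrict S)) (ν : ℝ) :
    Integrable (fun p : ℝ × ℝ => Complex.exp (Complex.I * f p.2 * Real.sin (ν * p.2 + p.1)))
      ((volume.restrict (Ioc (0:ℝ) (2 * Real.pi))).prod (volume.restrict S)) := by
  haveI : IsFiniteMeasure (volume.restrict S) :=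
    ⟨by rwa [Measure.restrict_apply_univ]⟩
  haveI : IsFiniteMeasure (volume.restrict (Ioc (0:ℝ) (2 * Real.pi))) :=
    ⟨by rw [Measure.restrict_apply_univ]; exact measure_Ioc_lt_top⟩
  have hFm : AEStronglyMeasurable
      (fun p : ℝ × ℝ => Complex.exp (Complex.I * f p.2 * Real.sin (ν * p.2 + p.1)))
      ((volume.restrict (Ioc (0:ℝ) (2 * Real.pi))).prod (volume.restrict S)) := by
    apply Complex.continuous_exp.comp_aestronglyMeasurable
    refine AEStronglyMeasurable.mul (AEStronglyMeasurable.mul aestronglyMeasurable_const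
      (Complex.continuous_ofReal.comp_aestronglyMeasurable ?_)) ?_
    · exact hfa.comp_snd
    · exact Continuous.aestronglyMeasurable (by fun_prop)
  refine Integrable.mono' (integrable_const 1) hFm (ae_of_all _ fun p => ?_)
  rw [norm_g_one]

lemma fubini_identity (S : Set ℝ) (hSm : MeasurableSet S) (hSfin : volume S < ⊤)
    {f : ℝ → ℝ} (hfa : AEStronglyMeasurable f (volume.restrict S)) (ν : ℝ) :
    ∫ s in Ioc (0:ℝ) (2 * Real.pi),
        (∫ u in S, Complex.exp (Complex.I * f u * Real.sin (ν * u + s)))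
      = (2 * Real.pi : ℝ) • ∫ u in S, ((besselJ 0 (f u) : ℝ) : ℂ) := by
  have hswap := integral_integral_swap (μ := volume.restrict (Ioc (0:ℝ) (2 * Real.pi)))
    (ν := volume.restrict S)
    (f := fun s u => Complex.exp (Complex.I * f u * Real.sin (ν * u + s)))
    (prod_integrable S hSfin hfa ν)
  rw [hswap]
  have hinner : ∀ u : ℝ,
      (∫ s in Ioc (0:ℝ) (2 * Real.pi), Complex.exp (Complex.I * f u * Real.sin (ν * u + s)))
        = (2 * Real.pi : ℝ) • ((besselJ 0 (f u) : ℝ) : ℂ) := by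
    intro u
    rw [← intervalIntegral.integral_of_le (by positivity : (0:ℝ) ≤ 2 * Real.pi)]
    rw [inner_avg (f u) (ν * u)]
    rw [besselJ_zero_coe]
    have h2π : (2 * (Real.pi:ℂ)) ≠ 0 := by
      refine mul_ne_zero two_ne_zero ?_
      exact_mod_cast Complex.ofReal_ne_zero.mpr Real.pi_ne_zero
    rw [Complex.real_smul]
    push_cast
    rw [← mul_assoc, mul_inv_cancel₀ h2π, one_mul]
  simp_rw [hinner]
  rw [integral_smul]
lemma compare_shift (S : Set ℝ) (hSm : MeasurableSet S) (hSfin : volume S < ⊤)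
    {f : ℝ → ℝ} (hf : IntegrableOn f S volume) {ν : ℝ} (hν : ν ≠ 0) (s : ℝ) :
    ‖(∫ u in S, Complex.exp (Complex.I * f u * Real.sin (ν * u)))
      - (∫ u in S, Complex.exp (Complex.I * f u * Real.sin (ν * u + s)))‖
      ≤ (∫ v, |S.indicator (fun _ => (1:ℝ)) (v + s / ν) - S.indicator (fun _ => (1:ℝ)) v|)
        + ∫ v, |S.indicator f (v + s / ν) - S.indicator f v| := by
  haveI : IsFiniteMeasure (volume.restrict S) := ⟨by rwa [Measure.restrict_apply_univ]⟩
  set d : ℝ := s / ν with hd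
  have hνd : ν * d = s := by rw [hd]; field_simp
  set g : ℝ → ℂ := fun u => Complex.exp (Complex.I * f u * Real.sin (ν * u)) with hg
  set g' : ℝ → ℂ := fun u => Complex.exp (Complex.I * f u * Real.sin (ν * u + s)) with hg'
  have hfa : AEStronglyMeasurable f (volume.restrict S) := hf.aestronglyMeasurable
  -- integrability of indicators
  have hg_int : Integrable (S.indicator g) volume := by
    rw [integrable_indicator_iff hSm]
    exact Integrable.mono' (integrable_const 1) (aesm_exp hfa (by fun_prop))
      (ae_of_all _ fun u => by rw [hg]; exact le_of_eq (norm_g_one (f u) (ν * u)))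
  have hg'_int : Integrable (S.indicator g') volume := by
    rw [integrable_indicator_iff hSm]
    exact Integrable.mono' (integrable_const 1) (aesm_exp hfa (by fun_prop))
      (ae_of_all _ fun u => by rw [hg']; exact le_of_eq (norm_g_one (f u) (ν * u + s)))
  have hgd_int : Integrable (fun v => S.indicator g (v + d)) volume := hg_int.comp_add_right d
  -- rewrite the first integral
  have e1 : (∫ u in S, g u) = ∫ v, S.indicator g (v + d) := by
    rw [← integral_indicator hSm]
    exact (MeasureTheory.integral_add_right_eq_self (μ := volume) (S.indicator g) d).symm
  have e2 : (∫ u in S, g' u) = ∫ v, S.indicator g' v := (integral_indicator hSm).symm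
  rw [e1, e2, ← integral_sub hgd_int hg'_int]
  -- pointwise bound
  have hF_int : Integrable (S.indicator f) volume := (integrable_indicator_iff hSm).mpr hf
  have h1_int : Integrable (S.indicator (fun _ => (1:ℝ))) volume := by
    rw [integrable_indicator_iff hSm]
    exact (integrableOn_const_iff).mpr (Or.inr hSfin)
  have hind_int : Integrable
      (fun v => |S.indicator (fun _ => (1:ℝ)) (v + d) - S.indicator (fun _ => (1:ℝ)) v|) volume :=
    ((h1_int.comp_add_right d).sub h1_int).abs
  have hFd_int : Integrable (fun v => |S.indicator f (v + d) - S.indicator f v|) volume :=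
    ((hF_int.comp_add_right d).sub hF_int).abs
  have hpt : ∀ v : ℝ, ‖S.indicator g (v + d) - S.indicator g' v‖
      ≤ |S.indicator (fun _ => (1:ℝ)) (v + d) - S.indicator (fun _ => (1:ℝ)) v|
        + |S.indicator f (v + d) - S.indicator f v| := by
    intro v
    by_cases hv1 : v + d ∈ S <;> by_cases hv2 : v ∈ S
    · rw [indicator_of_mem hv1, indicator_of_mem hv2, indicator_of_mem hv1,
        indicator_of_mem hv2, indicator_of_mem hv1, indicator_of_mem hv2]
      simp only [sub_self, abs_zero, zero_add]
      have harg : ν * (v + d) = ν * v + s := by rw [mul_add, hνd]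
      rw [hg, hg']
      simp only
      rw [harg]
      exact norm_g_sub (f (v + d)) (f v) (ν * v + s)
    · rw [indicator_of_mem hv1, indicator_of_notMem hv2, indicator_of_mem hv1,
        indicator_of_notMem hv2, indicator_of_mem hv1, indicator_of_notMem hv2]
      rw [sub_zero, sub_zero, sub_zero, hg]
      simp only
      rw [norm_g_one]
      have : |(1:ℝ)| = 1 := by norm_num
      nlinarith [abs_nonneg (f (v + d))]
    · rw [indicator_of_notMem hv1, indicator_of_mem hv2, indicator_of_notMem hv1,
        indicator_of_mem hv2, indicator_of_notMem hv1, indicator_of_mem hv2]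
      rw [zero_sub, zero_sub, zero_sub, norm_neg, hg']
      simp only
      rw [norm_g_one]
      simp only [abs_neg]
      have : |(1:ℝ)| = 1 := by norm_num
      nlinarith [abs_nonneg (f v)]
    · rw [indicator_of_notMem hv1, indicator_of_notMem hv2, indicator_of_notMem hv1,
        indicator_of_notMem hv2, indicator_of_notMem hv1, indicator_of_notMem hv2]
      simp
  calc ‖∫ v, (S.indicator g (v + d) - S.indicator g' v)‖
      ≤ ∫ v, ‖S.indicator g (v + d) - S.indicator g' v‖ := norm_integral_le_integral_norm _
    _ ≤ ∫ v, (|S.indicator (fun _ => (1:ℝ)) (v + d) - S.indicator (fun _ => (1:ℝ)) v|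
          + |S.indicator f (v + d) - S.indicator f v|) := by
        apply integral_mono (hgd_int.sub hg'_int).norm (hind_int.add hFd_int) hpt
    _ = _ := integral_add hind_int hFd_int

/-- If `f` is Lebesgue integrable on a (possibly unbounded) interval `(a,b)`, then
`∫_a^b exp(i f(u) sin(n u)) du → ∫_a^b J₀(f(u)) du` as `n → ∞`. -/
theorem tendsto_integral_exp_sin (a b : EReal) (f : ℝ → ℝ)
    (S : Set ℝ) (hS : S = {x : ℝ | a < (x : EReal) ∧ (x : EReal) < b})
    (hf : IntegrableOn f S) :
    Tendsto
      (fun n : ℕ => ∫ u in S, Complex.exp (Complex.I * (f u : ℂ) * (Real.sin (n * u) : ℂ)))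
      atTop (nhds (∫ u in S, (besselJ 0 (f u) : ℂ))) := by
  have hSm : MeasurableSet S := by
    rw [hS]
    exact (measurable_coe_real_ereal measurableSet_Ioi).inter
      (measurable_coe_real_ereal measurableSet_Iio)
  clear hS
  rcases eq_top_or_lt_top (volume S) with htop | hfin
  · -- infinite measure: both sides are junk value 0
    have hexp0 : ∀ n : ℕ,
        (∫ u in S, Complex.exp (Complex.I * (f u : ℂ) * (Real.sin (n * u) : ℂ))) = 0 := by
      intro n
      apply integral_undef
      intro hInt
      have h1 := hInt.hasFiniteIntegral
      rw [hasFiniteIntegral_iff_norm] at h1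
      have h2 : ∀ u : ℝ,
          ENNReal.ofReal ‖Complex.exp (Complex.I * (f u : ℂ) * (Real.sin (n * u) : ℂ))‖
            = 1 := by
        intro u; rw [norm_g_one]; exact ENNReal.ofReal_one
      rw [lintegral_congr h2, lintegral_one, Measure.restrict_apply_univ, htop] at h1
      exact lt_irrefl _ h1
    have htar0 : (∫ u in S, ((besselJ 0 (f u) : ℝ) : ℂ)) = 0 := by
      apply integral_undef
      intro hInt
      have hsum : Integrable (fun u => ‖((besselJ 0 (f u) : ℝ) : ℂ)‖ + ‖f u‖)
          (volume.restrict S) := hInt.norm.add hf.norm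
      have h1 := hsum.hasFiniteIntegral
      rw [hasFiniteIntegral_iff_norm] at h1
      have h2 : ∀ u : ℝ, (1 : ℝ≥0∞)
          ≤ ENNReal.ofReal ‖‖((besselJ 0 (f u) : ℝ) : ℂ)‖ + ‖f u‖‖ := by
        intro u
        rw [← ENNReal.ofReal_one]
        apply ENNReal.ofReal_le_ofReal
        have hb : ‖((besselJ 0 (f u) : ℝ) : ℂ)‖ = |besselJ 0 (f u)| := by
          rw [Complex.norm_real, Real.norm_eq_abs]
        have hnn : (0:ℝ) ≤ ‖((besselJ 0 (f u) : ℝ) : ℂ)‖ + ‖f u‖ :=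
          add_nonneg (norm_nonneg _) (norm_nonneg _)
        rw [Real.norm_eq_abs, _root_.abs_of_nonneg hnn, hb, Real.norm_eq_abs]
        exact one_le_besselJ_add (f u)
      have h3 : (⊤ : ℝ≥0∞) ≤ ∫⁻ u, ENNReal.ofReal ‖‖((besselJ 0 (f u) : ℝ) : ℂ)‖ + ‖f u‖‖
          ∂(volume.restrict S) := by
        calc (⊤:ℝ≥0∞) = ∫⁻ _, (1:ℝ≥0∞) ∂(volume.restrict S) := by
              rw [lintegral_one, Measure.restrict_apply_univ, htop]
          _ ≤ _ := lintegral_mono h2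
      exact absurd h1 (not_lt.mpr h3)
    simp only [hexp0, htar0]
    exact tendsto_const_nhds
  · -- finite measure case
    haveI : IsFiniteMeasure (volume.restrict S) := ⟨by rwa [Measure.restrict_apply_univ]⟩
    have hfa : AEStronglyMeasurable f (volume.restrict S) := hf.aestronglyMeasurable
    rw [Metric.tendsto_atTop]
    intro ε hε
    have hF_int : Integrable (S.indicator f) volume := (integrable_indicator_iff hSm).mpr hf
    have h1_int : Integrable (S.indicator (fun _ => (1:ℝ))) volume := by
      rw [integrable_indicator_iff hSm]
      exact (integrableOn_const_iff).mpr (Or.inr hfin)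
    obtain ⟨δ₁, hδ₁0, hδ₁⟩ := l1_translation h1_int (ε := ε / 4) (by positivity)
    obtain ⟨δ₂, hδ₂0, hδ₂⟩ := l1_translation hF_int (ε := ε / 4) (by positivity)
    set δ : ℝ := min δ₁ δ₂ with hδdef
    have hδ0 : 0 < δ := lt_min hδ₁0 hδ₂0
    obtain ⟨N₀, hN₀⟩ := exists_nat_gt (2 * Real.pi / δ)
    refine ⟨max N₀ 1, fun n hn => ?_⟩
    have hn1 : 1 ≤ n := le_trans (le_max_right _ _) hn
    have hnN : N₀ ≤ n := le_trans (le_max_left _ _) hn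
    have hν0 : (0:ℝ) < n := by exact_mod_cast hn1
    have hνne : (n:ℝ) ≠ 0 := ne_of_gt hν0
    have hrat : 2 * Real.pi / (n:ℝ) < δ := by
      rw [div_lt_iff₀ hν0]
      have h1 : 2 * Real.pi / δ < (n:ℝ) := lt_of_lt_of_le hN₀ (by exact_mod_cast hnN)
      rw [div_lt_iff₀ hδ0] at h1
      linarith
    set Fn : ℂ := ∫ u in S, Complex.exp (Complex.I * (f u : ℂ) * (Real.sin ((n:ℝ) * u) : ℂ))
      with hFn
    set T : ℂ := ∫ u in S, ((besselJ 0 (f u) : ℝ) : ℂ) with hT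
    set A : ℝ → ℂ :=
      fun s => ∫ u in S, Complex.exp (Complex.I * (f u : ℂ) * (Real.sin ((n:ℝ) * u + s) : ℂ))
      with hA
    -- per-shift bound
    have hub : ∀ s ∈ Set.uIoc (0:ℝ) (2 * Real.pi), ‖Fn - A s‖ ≤ ε / 2 := by
      intro s hs
      rw [Set.uIoc_of_le (by positivity : (0:ℝ) ≤ 2 * Real.pi)] at hs
      obtain ⟨hs0, hs2π⟩ := hs
      have hdlt : |s / (n:ℝ)| < δ := by
        rw [abs_of_pos (div_pos hs0 hν0)]
        calc s / (n:ℝ) ≤ 2 * Real.pi / (n:ℝ) := by gcongr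
          _ < δ := hrat
      have hcmp := compare_shift S hSm hfin hf hνne s
      have hb1 := hδ₁ (s / (n:ℝ)) (lt_of_lt_of_le hdlt (min_le_left _ _))
      have hb2 := hδ₂ (s / (n:ℝ)) (lt_of_lt_of_le hdlt (min_le_right _ _))
      calc ‖Fn - A s‖ ≤ _ + _ := hcmp
        _ ≤ ε / 4 + ε / 4 := add_le_add hb1 hb2
        _ ≤ ε / 2 := by linarith
    -- interval integrability of A
    have hAint : IntervalIntegrable A volume 0 (2 * Real.pi) := by
      rw [intervalIntegrable_iff_integrableOn_Ioc_of_le (by positivity)]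
      exact (prod_integrable S hfin hfa (n:ℝ)).integral_prod_left
    -- Fubini identity
    have hid1 : (∫ s in (0:ℝ)..(2 * Real.pi), A s) = (2 * Real.pi : ℝ) • T := by
      rw [intervalIntegral.integral_of_le (by positivity : (0:ℝ) ≤ 2 * Real.pi)]
      exact fubini_identity S hSm hfin hfa (n:ℝ)
    have hid2 : (∫ _ in (0:ℝ)..(2 * Real.pi), Fn) = (2 * Real.pi : ℝ) • Fn := by
      rw [intervalIntegral.integral_const, sub_zero]
    have hkey : (2 * Real.pi : ℝ) • (Fn - T) = ∫ s in (0:ℝ)..(2 * Real.pi), (Fn - A s) := by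
      rw [intervalIntegral.integral_sub intervalIntegrable_const hAint, hid1, hid2, smul_sub]
    have hnorm : ‖(2 * Real.pi : ℝ) • (Fn - T)‖ ≤ ε / 2 * |2 * Real.pi - 0| := by
      rw [hkey]
      exact intervalIntegral.norm_integral_le_of_norm_le_const hub
    rw [norm_smul, Real.norm_eq_abs,
      _root_.abs_of_nonneg (by positivity : (0:ℝ) ≤ 2 * Real.pi), sub_zero,
      _root_.abs_of_nonneg (by positivity : (0:ℝ) ≤ 2 * Real.pi)] at hnorm
    have hfinal : ‖Fn - T‖ ≤ ε / 2 := by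
      nlinarith [Real.pi_pos, norm_nonneg (Fn - T)]
    rw [dist_eq_norm]
    linarith
end

section
/- Let a, b ∈ ℝ with a < b, and let f : (a,b) → ℝ be locally integrable on (a,b) (i.e. integrable on every compact subinterval of (a,b)) and measurable. Then lim_{n → ∞} ∫_a^b exp(i·f(u)·sin(n·u)) du = ∫_a^b J₀(f(u)) du. -/
open MeasureTheory Filter Set
open scoped Topology

section JcAux

open Complex
open scoped Real

lemma neg_pi_lt_pi : -Real.pi < Real.pi := by linarith [Real.pi_pos]

/-- The integrand function `u ↦ exp(i x sin u)`. -/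
noncomputable def Fe (x : ℝ) (u : ℝ) : ℂ := Complex.exp (Complex.I * (x:ℂ) * (Real.sin u : ℂ))

/-- Complex-valued Bessel coefficient. -/
noncomputable def Jc (k : ℤ) (x : ℝ) : ℂ :=
  (2 * Real.pi : ℂ)⁻¹ *
    ∫ u in (-Real.pi)..Real.pi,
      Complex.exp (Complex.I * ((x : ℂ) * (Real.sin u : ℂ) - (k : ℂ) * (u : ℂ)))

noncomputable def Fe1 (x : ℝ) (u : ℝ) : ℂ := (Complex.I * (x:ℂ) * (Real.cos u : ℂ)) * Fe x u

noncomputable def Fe2 (x : ℝ) (u : ℝ) : ℂ :=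
  (Complex.I * (x:ℂ) * (Real.cos u : ℂ)) * Fe1 x u
    - (Complex.I * (x:ℂ) * (Real.sin u : ℂ)) * Fe x u

lemma continuous_Fe (x : ℝ) : Continuous (Fe x) := by
  unfold Fe; fun_prop

lemma continuous_Fe1 (x : ℝ) : Continuous (Fe1 x) := by
  unfold Fe1 Fe; fun_prop

lemma continuous_Fe2 (x : ℝ) : Continuous (Fe2 x) := by
  unfold Fe2 Fe1 Fe; fun_prop

lemma hasDerivAt_Fe (x : ℝ) (u : ℝ) : HasDerivAt (Fe x) (Fe1 x u) u := by
  have hg : HasDerivAt (fun u : ℝ => Complex.I * (x:ℂ) * (Real.sin u : ℂ))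
      (Complex.I * (x:ℂ) * (Real.cos u : ℂ)) u := by
    exact (Real.hasDerivAt_sin u).ofReal_comp.const_mul (Complex.I * (x:ℂ))
  have h := hg.cexp
  unfold Fe Fe1
  convert h using 1
  rw [Fe]
  ring

lemma hasDerivAt_Fe1 (x : ℝ) (u : ℝ) : HasDerivAt (Fe1 x) (Fe2 x u) u := by
  have hg : HasDerivAt (fun u : ℝ => Complex.I * (x:ℂ) * (Real.cos u : ℂ))
      (-(Complex.I * (x:ℂ) * (Real.sin u : ℂ))) u := by
    have := ((Real.hasDerivAt_cos u).ofReal_comp.const_mul (Complex.I * (x:ℂ)))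
    refine this.congr_deriv ?_
    push_cast
    ring
  have := hg.mul (hasDerivAt_Fe x u)
  refine this.congr_deriv ?_
  simp only [Fe2, Fe1]
  ring

lemma norm_Fe (x : ℝ) (u : ℝ) : ‖Fe x u‖ = 1 := by
  rw [Fe, Complex.norm_exp]
  simp [Complex.mul_re, Complex.mul_im]

lemma norm_Fe1_le (x : ℝ) (u : ℝ) : ‖Fe1 x u‖ ≤ |x| := by
  rw [Fe1, norm_mul, norm_Fe, mul_one]
  simp only [norm_mul, Complex.norm_I, one_mul, Complex.norm_real, Real.norm_eq_abs]
  calc |x| * |Real.cos u| ≤ |x| * 1 := by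
        gcongr; exact Real.abs_cos_le_one u
    _ = |x| := mul_one _

lemma norm_Fe2_le (x : ℝ) (u : ℝ) : ‖Fe2 x u‖ ≤ x^2 + |x| := by
  rw [Fe2]
  refine le_trans (norm_sub_le _ _) ?_
  have h1 : ‖Complex.I * (x:ℂ) * (Real.cos u : ℂ)‖ ≤ |x| := by
    simp only [norm_mul, Complex.norm_I, one_mul, Complex.norm_real, Real.norm_eq_abs]
    calc |x| * |Real.cos u| ≤ |x| * 1 := by gcongr; exact Real.abs_cos_le_one u
      _ = |x| := mul_one _
  have h2 : ‖Complex.I * (x:ℂ) * (Real.sin u : ℂ)‖ ≤ |x| := by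
    simp only [norm_mul, Complex.norm_I, one_mul, Complex.norm_real, Real.norm_eq_abs]
    calc |x| * |Real.sin u| ≤ |x| * 1 := by gcongr; exact Real.abs_sin_le_one u
      _ = |x| := mul_one _
  have h3 : ‖(Complex.I * (x:ℂ) * (Real.cos u : ℂ)) * Fe1 x u‖ ≤ |x| * |x| := by
    rw [norm_mul]
    exact mul_le_mul h1 (norm_Fe1_le x u) (norm_nonneg _) (abs_nonneg _)
  have h4 : ‖(Complex.I * (x:ℂ) * (Real.sin u : ℂ)) * Fe x u‖ ≤ |x| := by
    rw [norm_mul, norm_Fe, mul_one]; exact h2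
  have : |x| * |x| = x^2 := by rw [abs_mul_abs_self]; ring
  linarith

lemma Fe_per (x : ℝ) : Fe x Real.pi = Fe x (-Real.pi) := by
  simp [Fe, Real.sin_pi]

lemma Fe1_per (x : ℝ) : Fe1 x Real.pi = Fe1 x (-Real.pi) := by
  simp [Fe1, Fe, Real.sin_pi, Real.cos_neg]

lemma norm_Jc_le_one (k : ℤ) (x : ℝ) : ‖Jc k x‖ ≤ 1 := by
  have h1 : ∀ u ∈ Set.uIoc (-Real.pi) Real.pi,
      ‖Complex.exp (Complex.I * ((x : ℂ) * (Real.sin u : ℂ) - (k : ℂ) * (u : ℂ)))‖ ≤ 1 := by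
    intro u _
    rw [Complex.norm_exp]
    simp [Complex.mul_re]
  have h2 := intervalIntegral.norm_integral_le_of_norm_le_const h1
  rw [Jc, norm_mul]
  have hn : ‖(2 * (Real.pi : ℂ))⁻¹‖ = (2 * Real.pi)⁻¹ := by
    rw [norm_inv]
    have : (2 * (Real.pi : ℂ)) = ((2 * Real.pi : ℝ) : ℂ) := by push_cast; ring
    rw [this, Complex.norm_real, Real.norm_eq_abs, abs_of_pos (by positivity)]
  rw [hn]
  calc (2 * Real.pi)⁻¹ * ‖∫ u in (-Real.pi)..Real.pi,
      Complex.exp (Complex.I * ((x : ℂ) * (Real.sin u : ℂ) - (k : ℂ) * (u : ℂ)))‖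
      ≤ (2 * Real.pi)⁻¹ * (1 * |Real.pi - -Real.pi|) := by gcongr
    _ = 1 := by
        rw [one_mul, abs_of_pos (by linarith [Real.pi_pos] : (0:ℝ) < Real.pi - -Real.pi)]
        have := Real.pi_pos
        field_simp
        ring

lemma intervalIntegral_conj {a b : ℝ} (g : ℝ → ℂ) :
    (starRingEnd ℂ) (∫ u in a..b, g u) = ∫ u in a..b, (starRingEnd ℂ) (g u) := by
  rw [intervalIntegral, intervalIntegral, map_sub, ← integral_conj, ← integral_conj]

lemma Jc_zero_re (x : ℝ) : ((Jc 0 x).re : ℂ) = Jc 0 x := by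
  rw [← Complex.conj_eq_iff_re]
  rw [Jc, map_mul]
  congr 1
  · rw [map_inv₀, map_mul, Complex.conj_ofReal, map_ofNat]
  · rw [intervalIntegral_conj]
    have h : ∀ u : ℝ, (starRingEnd ℂ)
        (Complex.exp (Complex.I * ((x : ℂ) * (Real.sin u : ℂ) - ((0:ℤ) : ℂ) * (u : ℂ))))
        = (fun v : ℝ => Complex.exp
            (Complex.I * ((x : ℂ) * (Real.sin v : ℂ) - ((0:ℤ) : ℂ) * (v : ℂ)))) (-u) := by
      intro u
      rw [← Complex.exp_conj]
      simp only [map_mul, map_sub, Complex.conj_I, Complex.conj_ofReal, Int.cast_zero, map_zero]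
      push_cast
      rw [Complex.sin_neg]
      ring_nf
    simp_rw [h]
    rw [intervalIntegral.integral_comp_neg
      (fun u => Complex.exp (Complex.I * ((x : ℂ) * (Real.sin u : ℂ) - ((0:ℤ) : ℂ) * (u : ℂ))))]
    rw [neg_neg]

lemma fourier_smul_Fe (x : ℝ) (k : ℤ) (u : ℝ) {T : ℝ} (hT : T = 2 * Real.pi) :
    (fourier (-k) (u : AddCircle T) : ℂ) • Fe x u
      = Complex.exp (Complex.I * ((x : ℂ) * (Real.sin u : ℂ) - (k : ℂ) * (u : ℂ))) := by
  rw [smul_eq_mul, fourier_coe_apply, Fe, ← Complex.exp_add]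
  congr 1
  subst hT
  have h2 : (2 * (Real.pi:ℂ)) ≠ 0 := by
    simp [Complex.ofReal_ne_zero, Real.pi_ne_zero]
  push_cast
  field_simp
  ring

lemma Jc_eq_fourierCoeffOn (k : ℤ) (x : ℝ) :
    Jc k x = fourierCoeffOn neg_pi_lt_pi (Fe x) k := by
  rw [fourierCoeffOn_eq_integral]
  rw [Jc]
  have h : ∀ u : ℝ, (fourier (-k) (u : AddCircle (Real.pi - -Real.pi)) : ℂ) • Fe x u
      = Complex.exp (Complex.I * ((x : ℂ) * (Real.sin u : ℂ) - (k : ℂ) * (u : ℂ))) := by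
    intro u
    exact fourier_smul_Fe x k u (by ring)
  simp_rw [h]
  rw [real_smul]
  congr 1
  push_cast
  rw [one_div]
  congr 1
  ring

lemma norm_fourierCoeffOn_le {G : ℝ → ℂ} {C : ℝ}
    (h : ∀ u : ℝ, ‖G u‖ ≤ C) (k : ℤ) :
    ‖fourierCoeffOn neg_pi_lt_pi G k‖ ≤ C := by
  have hC : 0 ≤ C := le_trans (norm_nonneg _) (h 0)
  rw [fourierCoeffOn_eq_integral]
  rw [norm_smul]
  have h1 : ∀ u ∈ Set.uIoc (-Real.pi) Real.pi,
      ‖(fourier (-k) (u : AddCircle (Real.pi - -Real.pi)) : ℂ) • G u‖ ≤ C := by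
    intro u _
    have hf1 : ‖(fourier (-k) (u : AddCircle (Real.pi - -Real.pi)) : ℂ)‖ = 1 :=
      Circle.norm_coe _
    rw [norm_smul, hf1, one_mul]
    exact h u
  have h2 := intervalIntegral.norm_integral_le_of_norm_le_const h1
  have hπ := Real.pi_pos
  have hd : (0:ℝ) < Real.pi - -Real.pi := by linarith
  calc ‖(1 / (Real.pi - -Real.pi) : ℝ)‖ * ‖_‖
      ≤ ‖(1 / (Real.pi - -Real.pi) : ℝ)‖ * (C * |Real.pi - -Real.pi|) := by gcongr
    _ = C := by
        rw [Real.norm_eq_abs, abs_of_pos (one_div_pos.mpr hd), abs_of_pos hd]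
        field_simp

lemma ibp_step {k : ℤ} (hk : k ≠ 0) (G G' : ℝ → ℂ)
    (hG : ∀ u, HasDerivAt G (G' u) u) (hper : G Real.pi = G (-Real.pi))
    (hc' : Continuous G') :
    fourierCoeffOn neg_pi_lt_pi G k = (-Complex.I / k) * fourierCoeffOn neg_pi_lt_pi G' k := by
  have hGc : Continuous G := by
    rw [continuous_iff_continuousAt]; exact fun u => (hG u).continuousAt
  rw [fourierCoeffOn_of_hasDeriv_right neg_pi_lt_pi hk hGc.continuousOn
    (fun u _ => (hG u).hasDerivWithinAt) (hc'.intervalIntegrable _ _)]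
  rw [hper, sub_self, mul_zero, zero_sub]
  have hπ : (Real.pi : ℂ) ≠ 0 := Complex.ofReal_ne_zero.mpr Real.pi_ne_zero
  have hkc : (k : ℂ) ≠ 0 := Int.cast_ne_zero.mpr hk
  have hI := Complex.I_ne_zero
  push_cast
  field_simp
  ring_nf
  simp [Complex.I_sq]

lemma norm_Jc_le_sq {k : ℤ} (hk : k ≠ 0) (x : ℝ) :
    ‖Jc k x‖ ≤ (x^2 + |x|) / (k:ℝ)^2 := by
  rw [Jc_eq_fourierCoeffOn]
  rw [ibp_step hk (Fe x) (Fe1 x) (hasDerivAt_Fe x) (Fe_per x) (continuous_Fe1 x),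
      ibp_step hk (Fe1 x) (Fe2 x) (hasDerivAt_Fe1 x) (Fe1_per x) (continuous_Fe2 x)]
  rw [norm_mul, norm_mul]
  have hk' : ((k:ℝ)) ≠ 0 := Int.cast_ne_zero.mpr hk
  have hnk : ‖(-Complex.I / (k:ℂ))‖ = 1 / |(k:ℝ)| := by
    rw [norm_div, norm_neg, Complex.norm_I]
    congr 1
    rw [show ((k:ℂ)) = (((k:ℝ)):ℂ) by push_cast; ring, Complex.norm_real, Real.norm_eq_abs]
  rw [hnk]
  have hbound := norm_fourierCoeffOn_le (norm_Fe2_le x) k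
  calc (1 / |(k:ℝ)|) * ((1 / |(k:ℝ)|) * ‖fourierCoeffOn neg_pi_lt_pi (Fe2 x) k‖)
      ≤ (1 / |(k:ℝ)|) * ((1 / |(k:ℝ)|) * (x^2 + |x|)) := by gcongr
    _ = (x^2 + |x|) / (k:ℝ)^2 := by
        have habs : |(k:ℝ)| * |(k:ℝ)| = (k:ℝ)^2 := by rw [abs_mul_abs_self]; ring
        have habs' : |(k:ℝ)| ≠ 0 := abs_ne_zero.mpr hk'
        field_simp
        rw [sq_abs]
        ring

lemma summable_Jc (x : ℝ) : Summable (fun k : ℤ => Jc k x) := by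
  apply Summable.of_norm
  have hb : Summable (fun k : ℤ => (x^2 + |x|) * (1/(k:ℝ)^2)) := by
    apply Summable.mul_left
    exact (Real.summable_one_div_int_pow (p := 2)).mpr one_lt_two
  rw [← Finset.summable_compl_iff ({0} : Finset ℤ)]
  apply Summable.of_nonneg_of_le (fun _ => norm_nonneg _)
    (fun k => ?_) (hb.subtype _)
  have hk : (k : ℤ) ≠ 0 := by
    have := k.2; simpa using this
  calc ‖Jc (k:ℤ) x‖ ≤ (x^2 + |x|) / ((k:ℤ):ℝ)^2 := norm_Jc_le_sq hk x
    _ = (x^2 + |x|) * (1/((k:ℤ):ℝ)^2) := by ring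

lemma jacobiAnger (x θ : ℝ) :
    HasSum (fun k : ℤ => Jc k x * Complex.exp (Complex.I * (k:ℂ) * (θ:ℂ))) (Fe x θ) := by
  haveI : Fact (0 < 2 * Real.pi) := ⟨by positivity⟩
  have hper : Function.Periodic (Fe x) (2 * Real.pi) := by
    intro u; simp [Fe, Real.sin_add_two_pi]
  have hcont : Continuous (hper.lift) := (continuous_Fe x).quotient_liftOn' _
  set G : C(AddCircle (2 * Real.pi), ℂ) := ⟨hper.lift, hcont⟩ with hG
  have hGcoe : ∀ u : ℝ, G (u : AddCircle (2*Real.pi)) = Fe x u := fun u => hper.lift_coe u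
  have hcoeff : fourierCoeff (⇑G) = fun k => Jc k x := by
    funext k
    rw [fourierCoeff_eq_intervalIntegral (⇑G) k (-Real.pi)]
    have hb : -Real.pi + 2*Real.pi = Real.pi := by ring
    rw [hb]
    have h : ∀ u : ℝ,
        (fourier (-k) (u : AddCircle (2*Real.pi)) : ℂ) • G (u : AddCircle (2*Real.pi))
        = Complex.exp (Complex.I * ((x : ℂ) * (Real.sin u : ℂ) - (k : ℂ) * (u : ℂ))) := by
      intro u
      rw [hGcoe u]
      exact fourier_smul_Fe x k u rfl
    simp_rw [h]
    rw [Jc, real_smul]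
    congr 1
    push_cast
    rw [one_div]
  have hsummable : Summable (fourierCoeff (⇑G)) := by
    rw [hcoeff]; exact summable_Jc x
  have hsum := has_pointwise_sum_fourier_series_of_summable hsummable
    (θ : AddCircle (2 * Real.pi))
  rw [hGcoe θ] at hsum
  rw [hcoeff] at hsum
  have hfour : ∀ k : ℤ, (fourier k ((θ : ℝ) : AddCircle (2*Real.pi)) : ℂ)
      = Complex.exp (Complex.I * (k:ℂ) * (θ:ℂ)) := by
    intro k
    rw [fourier_coe_apply]
    congr 1
    have h2 : (2 * (Real.pi:ℂ)) ≠ 0 := by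
      simp [Complex.ofReal_ne_zero, Real.pi_ne_zero]
    push_cast
    field_simp
  convert hsum using 2 with k
  rw [smul_eq_mul, hfour k]
set_option maxHeartbeats 2000000

lemma continuous_Jc (k : ℤ) : Continuous (fun x : ℝ => Jc k x) := by
  unfold Jc
  apply Continuous.mul continuous_const
  apply intervalIntegral.continuous_parametric_intervalIntegral_of_continuous'
  fun_prop

lemma summable_ite_div (C : ℝ) :
    Summable (fun k : ℤ => if k = 0 then (0:ℝ) else C / (k:ℝ)^2) := by
  have hb : Summable (fun k : ℤ => C * (1/(k:ℝ)^2)) :=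
    Summable.mul_left _ ((Real.summable_one_div_int_pow (p := 2)).mpr one_lt_two)
  refine hb.congr fun k => ?_
  by_cases hk : k = 0
  · subst hk; simp
  · simp [hk]; ring

lemma norm_exp_I_int_mul (k : ℤ) (θ : ℝ) :
    ‖Complex.exp (Complex.I * (k:ℂ) * (θ:ℂ))‖ = 1 := by
  rw [Complex.norm_exp]
  simp [Complex.mul_re, Complex.mul_im]

lemma norm_Jc_le_of_abs_le {k : ℤ} (hk : k ≠ 0) {x M : ℝ} (hx : |x| ≤ M) :
    ‖Jc k x‖ ≤ (M^2 + M) / (k:ℝ)^2 := by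
  refine le_trans (norm_Jc_le_sq hk x) ?_
  have h0 : (0:ℝ) ≤ M := le_trans (abs_nonneg x) hx
  have h1 : x^2 ≤ M^2 := by
    rw [← _root_.sq_abs x]
    exact pow_le_pow_left₀ (abs_nonneg x) hx 2
  have hkr : ((k:ℝ)) ≠ 0 := Int.cast_ne_zero.mpr hk
  have hk2 : (0:ℝ) < (k:ℝ)^2 := by positivity
  rw [div_le_div_iff₀ hk2 hk2]
  nlinarith

end JcAux

/-- If `a < b` are real and `f` is measurable and locally integrable on `(a,b)`, then
`∫_a^b exp(i f(u) sin(n u)) du → ∫_a^b J₀(f(u)) du` as `n → ∞`. -/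
theorem tendsto_integral_exp_sin_locInt (a b : ℝ) (hab : a < b) (f : ℝ → ℝ)
    (hmeas : Measurable f)
    (hloc : LocallyIntegrableOn f (Set.Ioo a b)) :
    Tendsto
      (fun n : ℕ =>
        ∫ u in Set.Ioo a b, Complex.exp (Complex.I * (f u : ℂ) * (Real.sin (n * u) : ℂ)))
      atTop (nhds (∫ u in Set.Ioo a b, (besselJ 0 (f u) : ℂ))) := by
  clear hloc hab
  have hJ0 : ∀ y : ℝ, ((besselJ 0 y : ℝ) : ℂ) = Jc 0 y := fun y => Jc_zero_re y
  simp only [hJ0]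
  have hFe : ∀ (n : ℕ) (u : ℝ),
      Complex.exp (Complex.I * (f u : ℂ) * (Real.sin (n * u) : ℂ)) = Fe (f u) ((n:ℝ) * u) :=
    fun n u => rfl
  simp only [hFe]
  set I₀ := Set.Ioo a b with hI₀def
  have hI₀ : MeasurableSet I₀ := measurableSet_Ioo
  have hfin : volume I₀ < ⊤ := measure_Ioo_lt_top
  have hmeasFe : ∀ n : ℕ, Measurable (fun u => Fe (f u) ((n:ℝ) * u)) := by
    intro n; unfold Fe; fun_prop
  have hmeasJc : ∀ k : ℤ, Measurable (fun u => Jc k (f u)) :=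
    fun k => (continuous_Jc k).measurable.comp hmeas
  -- generic integrability of bounded measurable functions on finite-measure sets
  have hbdd_int : ∀ (g : ℝ → ℂ) (C : ℝ), Measurable g → (∀ u, ‖g u‖ ≤ C) →
      ∀ s : Set ℝ, volume s < ⊤ → IntegrableOn g s := by
    intro g C hg hC s hs
    exact Integrable.mono' (integrableOn_const hs.ne)
      hg.aestronglyMeasurable (ae_of_all _ hC)
  have hintFe : ∀ n : ℕ, ∀ s : Set ℝ, volume s < ⊤ →
      IntegrableOn (fun u => Fe (f u) ((n:ℝ)*u)) s :=
    fun n => hbdd_int _ 1 (hmeasFe n) (fun u => le_of_eq (norm_Fe _ _))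
  have hintJc0 : ∀ s : Set ℝ, volume s < ⊤ → IntegrableOn (fun u => Jc 0 (f u)) s :=
    hbdd_int _ 1 (hmeasJc 0) (fun u => norm_Jc_le_one 0 (f u))
  rw [Metric.tendsto_atTop]
  intro ε hε
  -- Step A : truncation level M
  obtain ⟨M, hM⟩ : ∃ M : ℕ, volume (I₀ ∩ {u | (M:ℝ) < |f u|}) < ENNReal.ofReal (ε/8) := by
    have hmeasS : ∀ M : ℕ, MeasurableSet (I₀ ∩ {u | (M:ℝ) < |f u|}) :=
      fun M => hI₀.inter (measurableSet_lt measurable_const hmeas.abs)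
    have hanti : Antitone (fun M : ℕ => I₀ ∩ {u | (M:ℝ) < |f u|}) := by
      intro M N hMN u hu
      refine ⟨hu.1, ?_⟩
      have h2 : (N:ℝ) < |f u| := hu.2
      have h3 : (M:ℝ) ≤ (N:ℝ) := by exact_mod_cast hMN
      exact lt_of_le_of_lt h3 h2
    have hempty : (⋂ M : ℕ, I₀ ∩ {u | (M:ℝ) < |f u|}) = ∅ := by
      ext u
      simp only [Set.mem_iInter, Set.mem_empty_iff_false, iff_false, not_forall]
      obtain ⟨M, hM⟩ := exists_nat_gt |f u|
      exact ⟨M, fun h => absurd h.2 (not_lt.mpr hM.le)⟩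
    have htend := tendsto_measure_iInter_atTop
      (fun M => (hmeasS M).nullMeasurableSet) hanti
      ⟨0, (lt_of_le_of_lt (measure_mono Set.inter_subset_left) hfin).ne⟩
    rw [hempty, measure_empty] at htend
    exact (htend.eventually_lt_const
      (ENNReal.ofReal_pos.mpr (by linarith))).exists
  set B := I₀ ∩ {u | (M:ℝ) < |f u|} with hBdef
  set A := I₀ ∩ {u | |f u| ≤ (M:ℝ)} with hAdef
  have hBmeas : MeasurableSet B := hI₀.inter (measurableSet_lt measurable_const hmeas.abs)
  have hAmeas : MeasurableSet A := hI₀.inter (measurableSet_le hmeas.abs measurable_const)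
  have hABdisj : Disjoint A B := by
    rw [Set.disjoint_left]
    rintro u ⟨_, h1⟩ ⟨_, h2⟩
    have h1' : |f u| ≤ (M:ℝ) := h1
    have h2' : (M:ℝ) < |f u| := h2
    exact absurd h2' (not_lt.mpr h1')
  have hABunion : A ∪ B = I₀ := by
    ext u
    constructor
    · rintro (h | h) <;> exact h.1
    · intro h
      rcases le_or_gt (|f u|) (M:ℝ) with h' | h'
      · exact Or.inl ⟨h, h'⟩
      · exact Or.inr ⟨h, h'⟩
  have hAfin : volume A < ⊤ := lt_of_le_of_lt (measure_mono Set.inter_subset_left) hfin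
  have hBfin : volume B < ⊤ := lt_of_le_of_lt (measure_mono Set.inter_subset_left) hfin
  -- the series coefficients
  set ck : ℤ → ℕ → ℂ := fun k n =>
    if k = 0 then 0
    else ∫ u in A, Jc k (f u) * Complex.exp (Complex.I * (k:ℂ) * (((n:ℝ) * u : ℝ) : ℂ)) with hck
  -- bound on terms
  have hterm_bound : ∀ (k : ℤ), k ≠ 0 → ∀ u ∈ A, ∀ θ : ℝ,
      ‖Jc k (f u) * Complex.exp (Complex.I * (k:ℂ) * (θ : ℂ))‖
        ≤ ((M:ℝ)^2 + M) / (k:ℝ)^2 := by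
    intro k hk u hu θ
    rw [norm_mul, norm_exp_I_int_mul, mul_one]
    exact norm_Jc_le_of_abs_le hk hu.2
  -- Step C : on A, the integral of the difference is the sum of the series
  have hA_eq : ∀ n : ℕ,
      (∫ u in A, (Fe (f u) ((n:ℝ)*u) - Jc 0 (f u))) = ∑' k : ℤ, ck k n := by
    intro n
    have hhs : HasSum (fun k : ℤ => ∫ u in A,
        (if k = 0 then 0
          else Jc k (f u) * Complex.exp (Complex.I * (k:ℂ) * (((n:ℝ) * u : ℝ) : ℂ))))
        (∫ u in A, (Fe (f u) ((n:ℝ)*u) - Jc 0 (f u))) := by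
      apply MeasureTheory.hasSum_integral_of_dominated_convergence
        (bound := fun (k : ℤ) (_ : ℝ) => if k = 0 then (0:ℝ) else ((M:ℝ)^2 + M) / (k:ℝ)^2)
      · intro k
        by_cases hk : k = 0
        · simp only [hk, if_true]
          exact aestronglyMeasurable_const
        · simp only [hk, if_false]
          apply Measurable.aestronglyMeasurable
          apply (hmeasJc k).mul
          fun_prop
      · intro k
        rw [ae_restrict_iff' hAmeas]
        refine ae_of_all _ fun u hu => ?_
        by_cases hk : k = 0
        · simp [hk]
        · simp only [hk, if_false]
          exact hterm_bound k hk u hu _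
      · refine ae_of_all _ fun u => ?_
        exact summable_ite_div _
      · have hconst : IntegrableOn (fun _ : ℝ => ∑' k : ℤ,
            (if k = 0 then (0:ℝ) else ((M:ℝ)^2 + M) / (k:ℝ)^2)) A volume :=
          integrableOn_const hAfin.ne
        exact hconst
      · refine ae_of_all _ fun u => ?_
        have h := (jacobiAnger (f u) ((n:ℝ) * u)).update 0 0
        have hfun : Function.update (fun k : ℤ => Jc k (f u) *
            Complex.exp (Complex.I * (k:ℂ) * (((n:ℝ) * u : ℝ) : ℂ))) 0 0
            = fun k : ℤ => (if k = 0 then 0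
              else Jc k (f u) * Complex.exp (Complex.I * (k:ℂ) * (((n:ℝ) * u : ℝ) : ℂ))) := by
          funext k
          rw [Function.update_apply]
        rw [hfun] at h
        convert h using 1
        simp only [Int.cast_zero, mul_zero, zero_mul, Complex.exp_zero, mul_one, zero_sub]
        ring
    have heq : ∀ k : ℤ, (∫ u in A,
        (if k = 0 then 0
          else Jc k (f u) * Complex.exp (Complex.I * (k:ℂ) * (((n:ℝ) * u : ℝ) : ℂ)))) = ck k n := by
      intro k
      by_cases hk : k = 0
      · simp [hck, hk]
      · simp only [hck, hk, if_false]
    rw [← funext heq]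
    exact hhs.tsum_eq.symm
  -- Step D : the series tends to 0
  have htends : Tendsto (fun n : ℕ => ∑' k : ℤ, ck k n) atTop (𝓝 0) := by
    have h0 : (0 : ℂ) = ∑' _ : ℤ, (0 : ℂ) := tsum_zero.symm
    rw [h0]
    apply tendsto_tsum_of_dominated_convergence
      (bound := fun k : ℤ => if k = 0 then (0:ℝ)
        else (((M:ℝ)^2 + M) / (k:ℝ)^2) * (volume A).toReal)
    · have : (fun k : ℤ => if k = 0 then (0:ℝ)
          else (((M:ℝ)^2 + M) / (k:ℝ)^2) * (volume A).toReal)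
          = fun k : ℤ => if k = 0 then (0:ℝ)
          else (((M:ℝ)^2 + M) * (volume A).toReal) / (k:ℝ)^2 := by
        funext k
        by_cases hk : k = 0 <;> simp [hk] <;> ring
      rw [this]
      exact summable_ite_div _
    · intro k
      by_cases hk : k = 0
      · simp only [hck, hk, if_true]
        exact tendsto_const_nhds
      · simp only [hck, hk, if_false]
        -- Riemann-Lebesgue
        set g : ℝ → ℂ := A.indicator (fun u => Jc k (f u)) with hg
        have RL := Real.tendsto_integral_exp_smul_cocompact g
        have hcomp : Tendsto (fun n : ℕ => (-(k:ℝ) * n / (2*Real.pi))) atTop (cocompact ℝ) := by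
          rw [cocompact_eq_atBot_atTop]
          rcases Ne.lt_or_gt hk with hneg | hpos
          · apply Tendsto.mono_right _ le_sup_right
            have hc : (0:ℝ) < -(k:ℝ) / (2*Real.pi) := by
              apply div_pos _ (by positivity)
              simp only [neg_pos]
              exact_mod_cast hneg
            have := (tendsto_natCast_atTop_atTop (R := ℝ)).const_mul_atTop hc
            refine this.congr fun n => ?_
            ring
          · apply Tendsto.mono_right _ le_sup_left
            have hc : (0:ℝ) < (k:ℝ) / (2*Real.pi) := by
              apply div_pos _ (by positivity)
              exact_mod_cast hpos
            have h1 := (tendsto_natCast_atTop_atTop (R := ℝ)).const_mul_atTop hc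
            have h2 := tendsto_neg_atTop_atBot.comp h1
            refine h2.congr fun n => ?_
            simp only [Function.comp_apply]
            ring
        have hfinal := RL.comp hcomp
        have hfun : ∀ n : ℕ,
            (∫ v : ℝ, Real.fourierChar (-(v * (-(k:ℝ) * n / (2*Real.pi)))) • g v)
              = ∫ u in A, Jc k (f u) * Complex.exp (Complex.I * (k:ℂ) * (((n:ℝ) * u : ℝ) : ℂ)) := by
          intro n
          rw [← integral_indicator hAmeas]
          congr 1
          funext v
          rw [hg]
          by_cases hv : v ∈ A
          · rw [Set.indicator_of_mem hv, Set.indicator_of_mem hv]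
            rw [Circle.smul_def, smul_eq_mul, Real.fourierChar_apply, mul_comm]
            congr 2
            have harg : 2 * Real.pi * (-(v * (-(k:ℝ) * n / (2*Real.pi)))) = (k:ℝ) * ((n:ℝ) * v) := by
              field_simp
            rw [harg]
            push_cast
            ring
          · rw [Set.indicator_of_notMem hv, Set.indicator_of_notMem hv, smul_zero]
        refine hfinal.congr fun n => ?_
        simp only [Function.comp_apply]
        exact hfun n
    · refine Eventually.of_forall fun n => fun k => ?_
      by_cases hk : k = 0
      · simp [hck, hk]
      · simp only [hck, hk, if_false]
        exact norm_setIntegral_le_of_norm_le_const hAfin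
          (fun u hu => hterm_bound k hk u hu _)
  -- Final assembly
  rw [Metric.tendsto_atTop] at htends
  obtain ⟨N, hN⟩ := htends (ε/2) (by linarith)
  refine ⟨N, fun n hn => ?_⟩
  have hsum_small : ‖∑' k : ℤ, ck k n‖ < ε/2 := by
    have := hN n hn
    rwa [dist_zero_right] at this
  rw [dist_eq_norm]
  have hsplit : (∫ u in I₀, Fe (f u) ((n:ℝ)*u)) - (∫ u in I₀, Jc 0 (f u))
      = (∫ u in B, (Fe (f u) ((n:ℝ)*u) - Jc 0 (f u))) + ∑' k : ℤ, ck k n := by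
    rw [← hA_eq n]
    rw [← integral_sub (hintFe n I₀ hfin) (hintJc0 I₀ hfin)]
    rw [← hABunion]
    have hintsubA : IntegrableOn (fun u => Fe (f u) ((n:ℝ)*u) - Jc 0 (f u)) A volume :=
      (hintFe n A hAfin).sub (hintJc0 A hAfin)
    have hintsubB : IntegrableOn (fun u => Fe (f u) ((n:ℝ)*u) - Jc 0 (f u)) B volume :=
      (hintFe n B hBfin).sub (hintJc0 B hBfin)
    rw [setIntegral_union hABdisj hBmeas hintsubA hintsubB]
    ring
  rw [hsplit]
  have hBbound : ‖∫ u in B, (Fe (f u) ((n:ℝ)*u) - Jc 0 (f u))‖ ≤ 2 * (volume B).toReal := by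
    apply norm_setIntegral_le_of_norm_le_const hBfin
    intro u _
    calc ‖Fe (f u) ((n:ℝ)*u) - Jc 0 (f u)‖ ≤ ‖Fe (f u) ((n:ℝ)*u)‖ + ‖Jc 0 (f u)‖ :=
          norm_sub_le _ _
      _ ≤ 1 + 1 := add_le_add (le_of_eq (norm_Fe _ _)) (norm_Jc_le_one _ _)
      _ = 2 := by norm_num
  have hBsmall : (volume B).toReal < ε/8 := ENNReal.toReal_lt_of_lt_ofReal hM
  calc ‖(∫ u in B, (Fe (f u) ((n:ℝ)*u) - Jc 0 (f u))) + ∑' k : ℤ, ck k n‖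
      ≤ ‖∫ u in B, (Fe (f u) ((n:ℝ)*u) - Jc 0 (f u))‖ + ‖∑' k : ℤ, ck k n‖ := norm_add_le _ _
    _ < 2 * (ε/8) + ε/2 := by
        apply add_lt_add_of_le_of_lt _ hsum_small
        calc ‖∫ u in B, (Fe (f u) ((n:ℝ)*u) - Jc 0 (f u))‖ ≤ 2 * (volume B).toReal := hBbound
          _ ≤ 2 * (ε/8) := by linarith
    _ < ε := by linarith
end

section
/- For every t ∈ ℝ one has ∫_0^1 J₀(t·√(−2·ln u)) du = e^{−t²/2}. -/
open MeasureTheory Filter Set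
open scoped Topology

lemma wallis_prod (n : ℕ) :
    (∏ i ∈ Finset.range n, (2 * (i : ℝ) + 1) / (2 * i + 2))
      = ((2 * n).factorial : ℝ) / (4 ^ n * ((n.factorial : ℝ)) ^ 2) := by
  induction n with
  | zero => simp
  | succ k ih =>
    rw [Finset.prod_range_succ, ih]
    have h1 : (2 * (k + 1)) = (2 * k + 1) + 1 := by ring
    have h2 : ((2 * k + 1 + 1).factorial : ℝ)
        = (2 * k + 2) * ((2 * k + 1) * ((2 * k).factorial : ℝ)) := by
      rw [Nat.factorial_succ, Nat.factorial_succ]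
      push_cast; ring
    have h3 : ((k + 1).factorial : ℝ) = (k + 1) * (k.factorial : ℝ) := by
      rw [Nat.factorial_succ]; push_cast; ring
    have hf : ((2 * k).factorial : ℝ) ≠ 0 := Nat.cast_ne_zero.mpr (2 * k).factorial_ne_zero
    have hk : ((k).factorial : ℝ) ≠ 0 := Nat.cast_ne_zero.mpr k.factorial_ne_zero
    have h4 : (4 : ℝ) ^ (k + 1) = 4 * 4 ^ k := by ring
    rw [h1, h2, h3, h4]
    have hk1 : ((k : ℝ) + 1) ≠ 0 := by positivity
    have h4k : (4 : ℝ) ^ k ≠ 0 := by positivity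
    have h2k2 : (2 * (k : ℝ) + 2) ≠ 0 := by positivity
    field_simp
    ring


lemma image_exp_neg : (fun x : ℝ => Real.exp (-x)) '' Ioi 0 = Ioo 0 1 := by
  ext u
  constructor
  · rintro ⟨x, hx, rfl⟩
    exact ⟨Real.exp_pos _, by rw [← Real.exp_zero]; exact Real.exp_lt_exp.mpr (by linarith [mem_Ioi.mp hx])⟩
  · rintro ⟨h0, h1⟩
    refine ⟨-Real.log u, ?_, by simp [Real.exp_log h0]⟩
    simp only [mem_Ioi]
    have := Real.log_neg h0 h1
    linarith


lemma hasDerivWithinAt_exp_neg (x : ℝ) :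
    HasDerivWithinAt (fun x : ℝ => Real.exp (-x)) (-Real.exp (-x)) (Ioi 0) x := by
  have h : HasDerivAt (fun x : ℝ => Real.exp (-x)) (Real.exp (-x) * (-1)) x :=
    (Real.hasDerivAt_exp (-x)).comp x (hasDerivAt_neg x)
  simpa using h.hasDerivWithinAt


lemma injOn_exp_neg : InjOn (fun x : ℝ => Real.exp (-x)) (Ioi 0) := fun a _ b _ h => by
  have := Real.exp_injective h; linarith


lemma integral_neg_log_pow (k : ℕ) :
    ∫ u in Set.Ioo (0 : ℝ) 1, (-Real.log u) ^ k = (k.factorial : ℝ) := by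
  rw [← image_exp_neg,
    integral_image_eq_integral_abs_deriv_smul measurableSet_Ioi
      (fun x _ => hasDerivWithinAt_exp_neg x) injOn_exp_neg]
  have : ∀ x : ℝ, |-Real.exp (-x)| • (-Real.log (Real.exp (-x))) ^ k
      = Real.exp (-x) * x ^ k := by
    intro x
    rw [abs_neg, abs_of_pos (Real.exp_pos _), Real.log_exp]
    simp [smul_eq_mul]
  simp_rw [this]
  have h := Real.Gamma_eq_integral (s := (k : ℝ) + 1) (by positivity)
  rw [Real.Gamma_nat_eq_factorial] at h
  simp only [add_sub_cancel_right, Real.rpow_natCast] at h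
  exact h.symm


lemma integrableOn_neg_log_pow (k : ℕ) :
    IntegrableOn (fun u : ℝ => (-Real.log u) ^ k) (Ioo 0 1) := by
  rw [← image_exp_neg,
    integrableOn_image_iff_integrableOn_abs_deriv_smul measurableSet_Ioi
      (fun x _ => hasDerivWithinAt_exp_neg x) injOn_exp_neg]
  have : ∀ x : ℝ, |-Real.exp (-x)| • (-Real.log (Real.exp (-x))) ^ k
      = Real.exp (-x) * x ^ k := by
    intro x
    rw [abs_neg, abs_of_pos (Real.exp_pos _), Real.log_exp]
    simp [smul_eq_mul]
  simp_rw [this]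
  have h := Real.GammaIntegral_convergent (s := (k : ℝ) + 1) (by positivity)
  refine h.congr_fun (fun x hx => ?_) measurableSet_Ioi
  rw [add_sub_cancel_right]; simp only [Real.rpow_natCast]


lemma integral_sin_pow_sym (k : ℕ) :
    ∫ u in (-Real.pi)..Real.pi, Real.sin u ^ (2 * k)
      = 2 * Real.pi * (((2 * k).factorial : ℝ) / (4 ^ k * ((k.factorial : ℝ)) ^ 2)) := by
  have hcont : Continuous fun u : ℝ => Real.sin u ^ (2 * k) := by continuity
  have hneg : ∫ u in (-Real.pi)..(0 : ℝ), Real.sin u ^ (2 * k)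
      = ∫ u in (0 : ℝ)..Real.pi, Real.sin u ^ (2 * k) := by
    have h := intervalIntegral.integral_comp_neg (a := (0:ℝ)) (b := Real.pi)
      (fun x => Real.sin x ^ (2 * k))
    simp only [neg_zero] at h
    rw [← h]
    congr 1
    ext x
    rw [Real.sin_neg, Even.neg_pow (even_two_mul k)]
  have hsplit : ∫ u in (-Real.pi)..Real.pi, Real.sin u ^ (2 * k)
      = (∫ u in (-Real.pi)..(0:ℝ), Real.sin u ^ (2 * k))
        + ∫ u in (0:ℝ)..Real.pi, Real.sin u ^ (2 * k) :=
    (intervalIntegral.integral_add_adjacent_intervals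
      (hcont.intervalIntegrable _ _) (hcont.intervalIntegrable _ _)).symm
  rw [hsplit, hneg, integral_sin_pow_even, wallis_prod]
  ring


lemma besselJ_zero_eq (x : ℝ) :
    besselJ 0 x = ∑' k : ℕ, (-1 : ℝ) ^ k * x ^ (2 * k) / (4 ^ k * ((k.factorial : ℝ)) ^ 2) := by
  have hle : -Real.pi ≤ Real.pi := by linarith [Real.pi_pos]
  have hπ : (Real.pi : ℝ) ≠ 0 := Real.pi_ne_zero
  -- reduce to cos integral
  have hcontC : Continuous fun u : ℝ => Complex.exp (Complex.I * ((x : ℂ) * (Real.sin u : ℂ))) := by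
    fun_prop
  have hintC : Integrable (fun u : ℝ => Complex.exp (Complex.I * ((x : ℂ) * (Real.sin u : ℂ))))
      (volume.restrict (Ioc (-Real.pi) Real.pi)) :=
    hcontC.integrableOn_Ioc
  have step1 : besselJ 0 x
      = (2 * Real.pi)⁻¹ * ∫ u in Ioc (-Real.pi) Real.pi, Real.cos (x * Real.sin u) := by
    rw [besselJ]
    simp only [Int.cast_zero, zero_mul, sub_zero]
    rw [intervalIntegral.integral_of_le hle]
    rw [show (2 * (Real.pi : ℂ)) = ((2 * Real.pi : ℝ) : ℂ) by push_cast; ring,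
      ← Complex.ofReal_inv, Complex.re_ofReal_mul, ← RCLike.re_to_complex,
      ← integral_re hintC]
    congr 1
    refine integral_congr_ae (Filter.Eventually.of_forall fun u => ?_)
    simp only [RCLike.re_to_complex]
    rw [mul_comm Complex.I, ← Complex.ofReal_mul, Complex.exp_ofReal_mul_I_re]
  -- series for the cos integral
  set F : ℕ → ℝ → ℝ := fun k u => (-1 : ℝ) ^ k * (x * Real.sin u) ^ (2 * k)
      / (((2 * k).factorial : ℝ)) with hF
  have hFcont : ∀ k, Continuous (F k) := by intro k; simp only [hF]; fun_prop
  have hFint : ∀ k, Integrable (F k) (volume.restrict (Ioc (-Real.pi) Real.pi)) :=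
    fun k => (hFcont k).integrableOn_Ioc
  have hbound : ∀ k u, ‖F k u‖ ≤ (x ^ 2) ^ k / (k.factorial : ℝ) := by
    intro k u
    have h1 : ‖F k u‖ = |x * Real.sin u| ^ (2 * k) / ((2 * k).factorial : ℝ) := by
      simp only [hF]
      rw [Real.norm_eq_abs, abs_div, abs_mul, abs_pow, abs_pow, abs_neg, abs_one, one_pow,
        one_mul, abs_of_pos (by positivity : (0:ℝ) < ((2*k).factorial : ℝ))]
    rw [h1]
    have h2 : |x * Real.sin u| ^ (2 * k) ≤ |x| ^ (2 * k) := by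
      apply pow_le_pow_left₀ (abs_nonneg _)
      rw [abs_mul]
      calc |x| * |Real.sin u| ≤ |x| * 1 :=
            mul_le_mul_of_nonneg_left (Real.abs_sin_le_one u) (abs_nonneg x)
        _ = |x| := mul_one _
    have h3 : |x| ^ (2 * k) = (x ^ 2) ^ k := by
      rw [pow_mul, sq_abs]
    have h4 : ((k.factorial : ℝ)) ≤ ((2 * k).factorial : ℝ) :=
      Nat.cast_le.mpr (Nat.factorial_le (by omega))
    exact div_le_div₀ (by positivity) (h2.trans_eq h3) (by positivity) h4
  have hsum : Summable fun k => ∫ u in Ioc (-Real.pi) Real.pi, ‖F k u‖ := by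
    refine Summable.of_nonneg_of_le
      (fun k => integral_nonneg fun u => norm_nonneg _) (fun k => ?_)
      (((Real.summable_pow_div_factorial (x ^ 2))).mul_left (2 * Real.pi))
    have hmeas : (volume (Ioc (-Real.pi) Real.pi)).toReal = 2 * Real.pi := by
      rw [Real.volume_Ioc, ENNReal.toReal_ofReal (by linarith [Real.pi_pos])]
      ring
    calc ∫ u in Ioc (-Real.pi) Real.pi, ‖F k u‖
        ≤ ∫ _u in Ioc (-Real.pi) Real.pi, (x ^ 2) ^ k / (k.factorial : ℝ) :=
          integral_mono (hFint k).norm (integrable_const _) (fun u => hbound k u)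
      _ = 2 * Real.pi * ((x ^ 2) ^ k / (k.factorial : ℝ)) := by
          rw [integral_const, smul_eq_mul, measureReal_def, Measure.restrict_apply_univ, hmeas]
  have hswap := integral_tsum_of_summable_integral_norm hFint hsum
  have hpt : ∀ u : ℝ, (∑' k, F k u) = Real.cos (x * Real.sin u) := fun u => by
    simpa only [hF] using (Real.hasSum_cos (x * Real.sin u)).tsum_eq
  have hval : ∀ k, (∫ u in Ioc (-Real.pi) Real.pi, F k u)
      = 2 * Real.pi * ((-1 : ℝ) ^ k * x ^ (2 * k) / (4 ^ k * ((k.factorial : ℝ)) ^ 2)) := by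
    intro k
    have h5 : (∫ u in Ioc (-Real.pi) Real.pi, F k u)
        = ∫ u in (-Real.pi)..Real.pi, F k u := (intervalIntegral.integral_of_le hle).symm
    rw [h5]
    have h6 : ∀ u, F k u
        = ((-1 : ℝ) ^ k * x ^ (2 * k) / ((2 * k).factorial : ℝ)) * Real.sin u ^ (2 * k) := by
      intro u; simp only [hF]; rw [mul_pow]; ring
    simp_rw [h6]
    rw [intervalIntegral.integral_const_mul, integral_sin_pow_sym]
    have h2k : ((2 * k).factorial : ℝ) ≠ 0 := Nat.cast_ne_zero.mpr (Nat.factorial_ne_zero _)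
    have hkf : ((k.factorial : ℝ)) ≠ 0 := Nat.cast_ne_zero.mpr (Nat.factorial_ne_zero _)
    field_simp
  rw [step1]
  have h7 : (∫ u in Ioc (-Real.pi) Real.pi, Real.cos (x * Real.sin u))
      = ∑' k, ∫ u in Ioc (-Real.pi) Real.pi, F k u := by
    rw [hswap]
    exact integral_congr_ae (Filter.Eventually.of_forall fun u => (hpt u).symm)
  rw [h7, tsum_congr hval, tsum_mul_left, ← mul_assoc,
    inv_mul_cancel₀ (by positivity : (2 * Real.pi : ℝ) ≠ 0), one_mul]

/-- For every real `t`, `∫_0^1 J₀(t √(−2 ln u)) du = e^{−t²/2}`. -/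
theorem integral_besselJ_sqrt_log (t : ℝ) :
    (∫ u in Set.Ioo (0 : ℝ) 1, besselJ 0 (t * Real.sqrt (-2 * Real.log u)))
      = Real.exp (-t ^ 2 / 2) := by
  set G : ℕ → ℝ → ℝ :=
    fun k u => (-(t ^ 2) / 2) ^ k * (-Real.log u) ^ k / ((k.factorial : ℝ)) ^ 2 with hG
  have hkf : ∀ k : ℕ, ((k.factorial : ℝ)) ≠ 0 :=
    fun k => Nat.cast_ne_zero.mpr (Nat.factorial_ne_zero _)
  have hpt : ∀ u ∈ Ioo (0 : ℝ) 1,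
      besselJ 0 (t * Real.sqrt (-2 * Real.log u)) = ∑' k, G k u := by
    intro u hu
    have hs : 0 ≤ -2 * Real.log u := by
      have := Real.log_neg hu.1 hu.2; linarith
    rw [besselJ_zero_eq]
    refine tsum_congr fun k => ?_
    have h1 : (t * Real.sqrt (-2 * Real.log u)) ^ (2 * k)
        = (t ^ 2 * (-2 * Real.log u)) ^ k := by
      rw [pow_mul, mul_pow, Real.sq_sqrt hs]
    rw [h1, ← div_div]
    have h2 : (-1 : ℝ) ^ k * (t ^ 2 * (-2 * Real.log u)) ^ k / 4 ^ k
        = (-(t ^ 2) / 2) ^ k * (-Real.log u) ^ k := by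
      rw [← mul_pow, ← mul_pow, ← div_pow]
      congr 1; ring
    rw [h2]
  have hGeq : ∀ k : ℕ, ∀ u : ℝ,
      G k u = ((-(t ^ 2) / 2) ^ k / ((k.factorial : ℝ)) ^ 2) * (-Real.log u) ^ k := by
    intro k u; simp only [hG]; ring
  have hGint : ∀ k, Integrable (G k) (volume.restrict (Ioo (0 : ℝ) 1)) := by
    intro k
    have := ((integrableOn_neg_log_pow k).const_mul
      ((-(t ^ 2) / 2) ^ k / ((k.factorial : ℝ)) ^ 2))
    exact this.congr (Filter.Eventually.of_forall fun u => (hGeq k u).symm)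
  have hnorm : ∀ k, (∫ u in Ioo (0 : ℝ) 1, ‖G k u‖) = (t ^ 2 / 2) ^ k / (k.factorial : ℝ) := by
    intro k
    have h3 : ∀ u ∈ Ioo (0 : ℝ) 1,
        ‖G k u‖ = ((t ^ 2 / 2) ^ k / ((k.factorial : ℝ)) ^ 2) * (-Real.log u) ^ k := by
      intro u hu
      have hlog : 0 ≤ -Real.log u := by
        have := Real.log_neg hu.1 hu.2; linarith
      have h4 : |(-(t ^ 2) / 2 : ℝ)| = t ^ 2 / 2 := by
        rw [abs_div, abs_neg, abs_of_nonneg (sq_nonneg t)]; norm_num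
      rw [Real.norm_eq_abs, abs_div, abs_mul, abs_pow, abs_pow, h4,
        abs_of_nonneg hlog, abs_of_pos (by positivity : (0:ℝ) < ((k.factorial : ℝ)) ^ 2)]
      ring
    rw [setIntegral_congr_fun measurableSet_Ioo h3, integral_const_mul, integral_neg_log_pow]
    rw [pow_two]
    field_simp
  have hsum : Summable fun k => ∫ u in Ioo (0 : ℝ) 1, ‖G k u‖ := by
    rw [funext hnorm]
    exact Real.summable_pow_div_factorial _
  have hint : ∀ k, (∫ u in Ioo (0 : ℝ) 1, G k u) = (-(t ^ 2) / 2) ^ k / (k.factorial : ℝ) := by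
    intro k
    simp_rw [hGeq k]
    rw [integral_const_mul, integral_neg_log_pow, pow_two]
    field_simp
  rw [setIntegral_congr_fun measurableSet_Ioo hpt,
    ← integral_tsum_of_summable_integral_norm hGint hsum, tsum_congr hint]
  rw [Real.exp_eq_exp_ℝ, NormedSpace.exp_eq_tsum_div]
end

section
/- Let f(u) = √(−2·ln u) for u ∈ (0,1) and let μ_n be the law of V_n = f(U)·sin(n·U), i.e. the pushforward of the uniform probability measure on (0,1) under u ↦ √(−2·ln u)·sin(n·u). Then μ_n converges weakly to the standard normal distribution N(0,1) (the probability measure on ℝ with density t ↦ (1/√(2π))·e^{−t²/2}). -/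
open MeasureTheory Filter Set intervalIntegral Real
open scoped Topology NNReal ENNReal

/-- The uniform probability measure on `(0,1)`. -/
noncomputable def uniform01 : Measure ℝ := volume.restrict (Set.Ioo (0 : ℝ) 1)


lemma periodic_average (ψ : ℝ → ℝ) (hψ : Continuous ψ) (hper : Function.Periodic ψ (2 * π))
    (a b : ℝ) :
    Tendsto (fun n : ℕ => ∫ u in a..b, ψ (n * u)) atTop
      (𝓝 ((b - a) * ((2 * π)⁻¹ * ∫ θ in (0:ℝ)..(2 * π), ψ θ))) := by
  have h2π : (0:ℝ) < 2 * π := by positivity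
  set m : ℝ := (2 * π)⁻¹ * ∫ θ in (0:ℝ)..(2 * π), ψ θ with hm
  set Φ : ℝ → ℝ := fun x => ∫ t in (0:ℝ)..x, (ψ t - m) with hΦ
  have hint : ∀ c d : ℝ, IntervalIntegrable (fun t => ψ t - m) volume c d :=
    fun c d => ((hψ.sub continuous_const).intervalIntegrable c d)
  have hΦcont : Continuous Φ := intervalIntegral.continuous_primitive hint 0
  have hmean : ∫ t in (0:ℝ)..(2 * π), (ψ t - m) = 0 := by
    rw [intervalIntegral.integral_sub (hψ.intervalIntegrable _ _) intervalIntegrable_const,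
      intervalIntegral.integral_const, smul_eq_mul, hm]
    field_simp
    ring
  have hpsub : Function.Periodic (fun t => ψ t - m) (2*π) := fun t => by simp [hper t]
  have hΦper : Function.Periodic Φ (2 * π) := by
    intro x
    have hadd := intervalIntegral.integral_add_adjacent_intervals (hint 0 x) (hint x (x+2*π))
    have hper' := hpsub.intervalIntegral_add_eq x 0
    simp only [zero_add] at hper'
    show (∫ t in (0:ℝ)..(x + 2*π), (ψ t - m)) = ∫ t in (0:ℝ)..x, (ψ t - m)
    rw [← hadd, hper', hmean, add_zero]
  clear_value m Φ
  obtain ⟨C, hC⟩ : ∃ C, ∀ x, |Φ x| ≤ C := by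
    obtain ⟨C, hC⟩ := (isCompact_Icc (a := (0:ℝ)) (b := 2*π)).exists_bound_of_continuousOn
      hΦcont.continuousOn
    refine ⟨C, fun x => ?_⟩
    have h1 : Φ x = Φ (x - ⌊x / (2*π)⌋ * (2*π)) := (hΦper.sub_int_mul_eq _).symm
    have h2 : x - ⌊x / (2*π)⌋ * (2*π) ∈ Icc (0:ℝ) (2*π) := by
      constructor
      · nlinarith [Int.sub_floor_div_mul_nonneg x h2π]
      · nlinarith [Int.sub_floor_div_mul_lt x h2π]
    rw [h1]
    simpa using hC _ h2
  have key : ∀ n : ℕ, 1 ≤ n → ∫ u in a..b, ψ (n * u)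
      = (n:ℝ)⁻¹ * (Φ (n * b) - Φ (n * a)) + m * (b - a) := by
    intro n hn
    have hn0 : (n:ℝ) ≠ 0 := by positivity
    rw [intervalIntegral.integral_comp_mul_left _ hn0]
    have hsplit : ∫ x in (n*a)..(n*b), ψ x
        = (∫ x in (n*a)..(n*b), (ψ x - m)) + ∫ x in (n*a)..(n*b), (m:ℝ) := by
      rw [← intervalIntegral.integral_add (hint _ _) intervalIntegrable_const]
      simp
    have hΦdiff : ∫ x in (n*a)..(n*b), (ψ x - m) = Φ (n*b) - Φ (n*a) := by
      have h := intervalIntegral.integral_add_adjacent_intervals (hint 0 (n*a)) (hint (n*a) (n*b))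
      simp only [hΦ]
      linarith [h]
    rw [hsplit, hΦdiff, intervalIntegral.integral_const, smul_eq_mul]
    field_simp
    ring
  have hbound : ∀ n : ℕ, 1 ≤ n →
      |(∫ u in a..b, ψ (n * u)) - (b - a) * m| ≤ 2 * C / n := by
    intro n hn
    rw [key n hn]
    have hn0 : (0:ℝ) < n := by positivity
    have h1 : |(n:ℝ)⁻¹ * (Φ (n * b) - Φ (n * a))| ≤ (n:ℝ)⁻¹ * (2 * C) := by
      rw [abs_mul, abs_inv, abs_of_pos hn0]
      gcongr
      calc |Φ (n*b) - Φ (n*a)| ≤ |Φ (n*b)| + |Φ (n*a)| := abs_sub _ _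
        _ ≤ C + C := add_le_add (hC _) (hC _)
        _ = 2 * C := by ring
    calc |(n:ℝ)⁻¹ * (Φ (n * b) - Φ (n * a)) + m * (b - a) - (b - a) * m|
        = |(n:ℝ)⁻¹ * (Φ (n * b) - Φ (n * a))| := by ring_nf
      _ ≤ (n:ℝ)⁻¹ * (2 * C) := h1
      _ = 2 * C / n := by ring
  rw [show (b - a) * m = 0 + (b-a)*m by ring]
  have h0 : Tendsto (fun n : ℕ => (∫ u in a..b, ψ (n * u)) - (b - a) * m) atTop (𝓝 0) := by
    apply squeeze_zero_norm' _ (tendsto_const_div_atTop_nhds_zero_nat (2*C))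
    filter_upwards [eventually_ge_atTop 1] with n hn
    exact hbound n hn
  simpa using h0.add_const ((b-a)*m)


noncomputable def fBM : ℝ → ℝ := fun u => Real.sqrt (-2 * Real.log u)
lemma fBM_nonneg (u : ℝ) : 0 ≤ fBM u := Real.sqrt_nonneg _
lemma fBM_measurable : Measurable fBM := (measurable_const.mul Real.measurable_log).sqrt
lemma fBM_continuousOn : ContinuousOn fBM (Ioi (0:ℝ)) := by
  apply Real.continuous_sqrt.comp_continuousOn
  exact (continuousOn_const.mul (Real.continuousOn_log.mono (fun x hx => ne_of_gt hx)))

noncomputable def hAvg (g : BoundedContinuousFunction ℝ ℝ) (u : ℝ) : ℝ :=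
  (2 * π)⁻¹ * ∫ θ in (0:ℝ)..(2 * π), g (fBM u * Real.sin θ)

lemma intInt_of_bdd {φ : ℝ → ℝ} (hm : AEMeasurable φ) {C : ℝ} (hb : ∀ x, |φ x| ≤ C)
    (c d : ℝ) : IntervalIntegrable φ volume c d := by
  rw [intervalIntegrable_iff]
  exact Measure.integrableOn_of_bounded measure_Ioc_lt_top.ne
    hm.aestronglyMeasurable (Filter.Eventually.of_forall hb)

variable (g : BoundedContinuousFunction ℝ ℝ)

lemma phi_meas (c : ℝ) : Measurable fun u : ℝ => (g (fBM u * Real.sin (c * u)) : ℝ) :=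
  g.continuous.measurable.comp
    ((fBM_measurable).mul (Real.measurable_sin.comp (measurable_const.mul measurable_id)))

lemma g_bdd : ∀ x : ℝ, |(g x : ℝ)| ≤ ‖g‖ := fun x => by
  simpa [Real.norm_eq_abs] using g.norm_coe_le_norm x

lemma psi_cont (c : ℝ) : Continuous fun θ : ℝ => (g (c * Real.sin θ) : ℝ) :=
  g.continuous.comp (continuous_const.mul Real.continuous_sin)

lemma psi_per (c : ℝ) : Function.Periodic (fun θ : ℝ => (g (c * Real.sin θ) : ℝ)) (2 * π) :=
  fun θ => by simp [Real.sin_periodic θ]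

lemma hAvg_bdd (u : ℝ) : |hAvg g u| ≤ ‖g‖ := by
  have h2π : (0:ℝ) < 2 * π := by positivity
  have hb : ‖∫ θ in (0:ℝ)..(2 * π), (g (fBM u * Real.sin θ) : ℝ)‖ ≤ ‖g‖ * |2 * π - 0| :=
    intervalIntegral.norm_integral_le_of_norm_le_const fun θ _ => by
      simpa [Real.norm_eq_abs] using g_bdd g _
  rw [hAvg, abs_mul, abs_inv, abs_of_pos h2π]
  rw [Real.norm_eq_abs] at hb
  rw [sub_zero, abs_of_pos h2π] at hb
  calc (2*π)⁻¹ * |∫ θ in (0:ℝ)..(2*π), (g (fBM u * Real.sin θ) : ℝ)|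
      ≤ (2*π)⁻¹ * (‖g‖ * (2*π)) := mul_le_mul_of_nonneg_left hb (by positivity)
    _ = ‖g‖ := by field_simp

lemma hAvg_meas : Measurable (hAvg g) := by
  apply Measurable.const_mul
  have h : ∀ u : ℝ, (∫ θ in (0:ℝ)..(2 * π), (g (fBM u * Real.sin θ) : ℝ))
      = ∫ θ in Ioc (0:ℝ) (2 * π), (g (fBM u * Real.sin θ) : ℝ) := by
    intro u
    rw [intervalIntegral.integral_of_le (by positivity)]
  simp_rw [h]
  have hsm : StronglyMeasurable fun p : ℝ × ℝ => (g (fBM p.1 * Real.sin p.2) : ℝ) :=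
    (g.continuous.measurable.comp
      ((fBM_measurable.comp measurable_fst).mul
        (Real.measurable_sin.comp measurable_snd))).stronglyMeasurable
  exact (MeasureTheory.StronglyMeasurable.integral_prod_right'
    (ν := volume.restrict (Ioc (0:ℝ) (2*π))) hsm).measurable

lemma stepB :
    Tendsto (fun n : ℕ => ∫ u in (0:ℝ)..1, (g (fBM u * Real.sin (n * u)) : ℝ)) atTop
      (𝓝 (∫ u in (0:ℝ)..1, hAvg g u)) := by
  rw [Metric.tendsto_atTop]
  intro ε hε
  set C : ℝ := ‖g‖ + 1 with hCdef
  have hC : 0 < C := by positivity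
  have hgC : ∀ x : ℝ, |(g x : ℝ)| ≤ C := fun x => (g_bdd g x).trans (by simp [hCdef])
  have hhC : ∀ u : ℝ, |hAvg g u| ≤ C := fun u => (hAvg_bdd g u).trans (by simp [hCdef])
  have hint_φ : ∀ (n : ℕ) (c d : ℝ),
      IntervalIntegrable (fun u => (g (fBM u * Real.sin (n * u)) : ℝ)) volume c d :=
    fun n c d => intInt_of_bdd (phi_meas g n).aemeasurable (fun x => hgC _) c d
  have hint_h : ∀ c d : ℝ, IntervalIntegrable (hAvg g) volume c d :=
    fun c d => intInt_of_bdd (hAvg_meas g).aemeasurable hhC c d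
  -- the cutoff
  set δ : ℝ := min (ε / (16 * C)) 4⁻¹ with hδdef
  have hδpos : 0 < δ := lt_min (by positivity) (by norm_num)
  have hδ4 : δ ≤ 4⁻¹ := min_le_right _ _
  have hδε : δ ≤ ε / (16 * C) := min_le_left _ _
  set a : ℝ := δ with hadef
  set b : ℝ := 1 - δ with hbdef
  have ha : 0 < a := hδpos
  have hab : a ≤ b := by rw [hadef, hbdef]; linarith [hδ4]
  have hb1 : b ≤ 1 := by rw [hbdef]; linarith [hδpos]
  have hba1 : b - a ≤ 1 := by rw [hadef, hbdef]; linarith [hδpos]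
  -- tail bound
  have tail : ∀ (φ : ℝ → ℝ), (∀ c d : ℝ, IntervalIntegrable φ volume c d) →
      (∀ x : ℝ, |φ x| ≤ C) →
      |(∫ u in (0:ℝ)..1, φ u) - ∫ u in a..b, φ u| ≤ 2 * C * δ := by
    intro φ hii hbd
    have e1 : (∫ u in (0:ℝ)..a, φ u) + ∫ u in a..b, φ u = ∫ u in (0:ℝ)..b, φ u :=
      integral_add_adjacent_intervals (hii _ _) (hii _ _)
    have e2 : (∫ u in (0:ℝ)..b, φ u) + ∫ u in b..1, φ u = ∫ u in (0:ℝ)..1, φ u :=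
      integral_add_adjacent_intervals (hii _ _) (hii _ _)
    have n1 : |∫ u in (0:ℝ)..a, φ u| ≤ C * δ := by
      have := intervalIntegral.norm_integral_le_of_norm_le_const
        (a := (0:ℝ)) (b := a) (C := C) (f := φ)
        (fun x _ => by simpa [Real.norm_eq_abs] using hbd x)
      rw [Real.norm_eq_abs] at this
      calc |∫ u in (0:ℝ)..a, φ u| ≤ C * |a - 0| := this
        _ = C * δ := by rw [hadef]; rw [sub_zero, abs_of_pos hδpos]
    have n2 : |∫ u in b..1, φ u| ≤ C * δ := by
      have := intervalIntegral.norm_integral_le_of_norm_le_const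
        (a := b) (b := (1:ℝ)) (C := C) (f := φ)
        (fun x _ => by simpa [Real.norm_eq_abs] using hbd x)
      rw [Real.norm_eq_abs] at this
      calc |∫ u in b..1, φ u| ≤ C * |1 - b| := this
        _ = C * δ := by rw [hbdef]; rw [show (1:ℝ) - (1 - δ) = δ by ring, abs_of_pos hδpos]
    calc |(∫ u in (0:ℝ)..1, φ u) - ∫ u in a..b, φ u|
        = |(∫ u in (0:ℝ)..a, φ u) + ∫ u in b..1, φ u| := by
          congr 1; linarith [e1, e2]
      _ ≤ |∫ u in (0:ℝ)..a, φ u| + |∫ u in b..1, φ u| := abs_add_le _ _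
      _ ≤ C * δ + C * δ := add_le_add n1 n2
      _ = 2 * C * δ := by ring
  -- compact interval, uniform continuity data
  have hKsub : Icc a b ⊆ Ioi (0:ℝ) := fun x hx => lt_of_lt_of_le ha hx.1
  obtain ⟨M0, hM0⟩ := (isCompact_Icc (a := a) (b := b)).exists_bound_of_continuousOn
    (fBM_continuousOn.mono hKsub)
  set ε₁ : ℝ := ε / 8 with hε₁def
  have hε₁pos : 0 < ε₁ := by positivity
  -- uniform continuity of g on [-M0, M0]
  obtain ⟨δ₁, hδ₁pos, hδ₁⟩ := Metric.uniformContinuousOn_iff.mp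
    ((isCompact_Icc (a := -M0) (b := M0)).uniformContinuousOn_of_continuous
      g.continuous.continuousOn) ε₁ hε₁pos
  obtain ⟨δ₂, hδ₂pos, hδ₂⟩ := Metric.uniformContinuousOn_iff.mp
    ((isCompact_Icc (a := a) (b := b)).uniformContinuousOn_of_continuous
      (fBM_continuousOn.mono hKsub)) δ₁ hδ₁pos
  have key : ∀ u ∈ Icc a b, ∀ u' ∈ Icc a b, |u - u'| < δ₂ →
      ∀ θ : ℝ, |(g (fBM u * Real.sin θ) : ℝ) - g (fBM u' * Real.sin θ)| ≤ ε₁ := by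
    intro u hu u' hu' huu θ
    have hsin : |Real.sin θ| ≤ 1 := abs_le.mpr ⟨Real.neg_one_le_sin θ, Real.sin_le_one θ⟩
    have hmem : ∀ w ∈ Icc a b, fBM w * Real.sin θ ∈ Icc (-M0) M0 := by
      intro w hw
      have h1 : |fBM w * Real.sin θ| ≤ M0 := by
        rw [abs_mul]
        have hw' : |fBM w| ≤ M0 := by simpa [Real.norm_eq_abs] using hM0 w hw
        nlinarith [abs_nonneg (fBM w), abs_nonneg (Real.sin θ)]
      exact abs_le.mp h1
    have hd : dist (fBM u) (fBM u') < δ₁ := hδ₂ u hu u' hu' (by rwa [Real.dist_eq])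
    have hdist : dist (fBM u * Real.sin θ) (fBM u' * Real.sin θ) < δ₁ := by
      rw [Real.dist_eq, ← sub_mul, abs_mul]
      calc |fBM u - fBM u'| * |Real.sin θ| ≤ |fBM u - fBM u'| * 1 :=
            mul_le_mul_of_nonneg_left hsin (abs_nonneg _)
        _ = |fBM u - fBM u'| := mul_one _
        _ < δ₁ := by rwa [Real.dist_eq] at hd
    have := hδ₁ _ (hmem u hu) _ (hmem u' hu') hdist
    rw [Real.dist_eq] at this
    exact this.le
  -- the partition
  obtain ⟨N', hN'⟩ := exists_nat_gt ((b - a) / δ₂)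
  set N : ℕ := N' + 1 with hNdef
  have hN0 : 0 < N := Nat.succ_pos _
  have hNR : (0:ℝ) < N := by positivity
  set Δ : ℝ := (b - a) / N with hΔdef
  have hΔ0 : 0 ≤ Δ := by
    apply div_nonneg (by linarith [hab]) hNR.le
  have hΔδ₂ : Δ < δ₂ := by
    rw [hΔdef, div_lt_iff₀ hNR]
    have h1 : (b - a) / δ₂ < N := lt_of_le_of_lt hN'.le (by exact_mod_cast Nat.lt_succ_self N')
    calc b - a = ((b - a) / δ₂) * δ₂ := by field_simp
      _ < N * δ₂ := by apply mul_lt_mul_of_pos_right h1 hδ₂pos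
      _ = δ₂ * N := mul_comm _ _
  set uu : ℕ → ℝ := fun j => a + j * Δ with huudef
  have hu0 : uu 0 = a := by simp [huudef]
  have huN : uu N = b := by
    rw [huudef]; simp only []
    rw [hΔdef]; field_simp
    ring
  have hustep : ∀ j : ℕ, uu (j + 1) = uu j + Δ := by
    intro j; rw [huudef]; simp only []; push_cast; ring
  have huK : ∀ j : ℕ, j ≤ N → uu j ∈ Icc a b := by
    intro j hj
    constructor
    · rw [huudef]; simp only []
      nlinarith [mul_nonneg (Nat.cast_nonneg (α := ℝ) j) hΔ0]
    · rw [huudef]; simp only []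
      have : (j:ℝ) * Δ ≤ N * Δ := by
        apply mul_le_mul_of_nonneg_right _ hΔ0
        exact_mod_cast hj
      have hNΔ : (N:ℝ) * Δ = b - a := by rw [hΔdef]; field_simp
      linarith
  have humono : ∀ j : ℕ, uu j ≤ uu (j + 1) := fun j => by
    rw [hustep j]; linarith [hΔ0]
  -- the limit of the step approximation
  set S : ℝ := ∑ j ∈ Finset.range N, Δ * hAvg g (uu j) with hSdef
  have hSn : Tendsto (fun n : ℕ => ∑ j ∈ Finset.range N,
      ∫ u in uu j..uu (j+1), (g (fBM (uu j) * Real.sin (n * u)) : ℝ)) atTop (𝓝 S) := by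
    rw [hSdef]
    apply tendsto_finset_sum
    intro j _
    have := periodic_average (fun θ => (g (fBM (uu j) * Real.sin θ) : ℝ))
      (psi_cont g _) (psi_per g _) (uu j) (uu (j+1))
    have heq : (uu (j+1) - uu j) * ((2 * π)⁻¹ *
        ∫ θ in (0:ℝ)..(2*π), (g (fBM (uu j) * Real.sin θ) : ℝ)) = Δ * hAvg g (uu j) := by
      rw [hustep j, hAvg]; ring
    rwa [heq] at this
  -- bound 1 : the n-th integral vs the step approximation
  have bound1 : ∀ n : ℕ, |(∫ u in a..b, (g (fBM u * Real.sin (n * u)) : ℝ)) -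
      ∑ j ∈ Finset.range N, ∫ u in uu j..uu (j+1),
        (g (fBM (uu j) * Real.sin (n * u)) : ℝ)| ≤ ε₁ := by
    intro n
    have hsplit : ∑ j ∈ Finset.range N, ∫ u in uu j..uu (j+1),
        (g (fBM u * Real.sin (n * u)) : ℝ) = ∫ u in a..b, (g (fBM u * Real.sin (n * u)) : ℝ) := by
      have := intervalIntegral.sum_integral_adjacent_intervals
        (a := uu) (n := N) (f := fun u => (g (fBM u * Real.sin (n * u)) : ℝ))
        (fun i _ => hint_φ n _ _)
      rwa [hu0, huN] at this
    rw [← hsplit, ← Finset.sum_sub_distrib]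
    calc |∑ j ∈ Finset.range N, ((∫ u in uu j..uu (j+1), (g (fBM u * Real.sin (n * u)) : ℝ)) -
          ∫ u in uu j..uu (j+1), (g (fBM (uu j) * Real.sin (n * u)) : ℝ))|
        ≤ ∑ j ∈ Finset.range N, |(∫ u in uu j..uu (j+1), (g (fBM u * Real.sin (n * u)) : ℝ)) -
          ∫ u in uu j..uu (j+1), (g (fBM (uu j) * Real.sin (n * u)) : ℝ)| :=
          Finset.abs_sum_le_sum_abs _ _
      _ ≤ ∑ j ∈ Finset.range N, ε₁ * Δ := by
          apply Finset.sum_le_sum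
          intro j hj
          have hjN : j + 1 ≤ N := Finset.mem_range.mp hj
          have hKj := huK j (by omega)
          have hKj1 := huK (j+1) hjN
          have hcont2 : Continuous (fun u : ℝ => (g (fBM (uu j) * Real.sin ((n:ℝ) * u)) : ℝ)) :=
            g.continuous.comp (continuous_const.mul
              (Real.continuous_sin.comp (continuous_const.mul continuous_id)))
          rw [← intervalIntegral.integral_sub (hint_φ n _ _) (hcont2.intervalIntegrable _ _)]
          have hptwise : ∀ x ∈ Set.uIoc (uu j) (uu (j+1)),
              ‖(g (fBM x * Real.sin (n * x)) : ℝ) - g (fBM (uu j) * Real.sin (n * x))‖ ≤ ε₁ := by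
            intro x hx
            rw [Set.uIoc_of_le (humono j)] at hx
            have hxK : x ∈ Icc a b := ⟨hKj.1.trans hx.1.le, hx.2.trans hKj1.2⟩
            have hxd : |x - uu j| < δ₂ := by
              rw [abs_of_pos (by linarith [hx.1])]
              have := hx.2
              rw [hustep j] at this
              linarith [hΔδ₂]
            simpa [Real.norm_eq_abs] using key x hxK (uu j) hKj hxd (n * x)
          have := intervalIntegral.norm_integral_le_of_norm_le_const hptwise
          rw [Real.norm_eq_abs] at this
          calc |∫ u in uu j..uu (j+1), ((g (fBM u * Real.sin (n * u)) : ℝ) -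
                g (fBM (uu j) * Real.sin (n * u)))| ≤ ε₁ * |uu (j+1) - uu j| := this
            _ = ε₁ * Δ := by rw [hustep j]; rw [show uu j + Δ - uu j = Δ by ring,
                abs_of_nonneg hΔ0]
      _ = N * (ε₁ * Δ) := by rw [Finset.sum_const, Finset.card_range]; simp [nsmul_eq_mul]
      _ = ε₁ * (b - a) := by rw [hΔdef]; field_simp
      _ ≤ ε₁ * 1 := mul_le_mul_of_nonneg_left hba1 hε₁pos.le
      _ = ε₁ := mul_one _
  -- bound 2 : the limit integral vs S
  have bound2 : |(∫ u in a..b, hAvg g u) - S| ≤ ε₁ := by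
    have hsplit : ∑ j ∈ Finset.range N, ∫ u in uu j..uu (j+1), hAvg g u
        = ∫ u in a..b, hAvg g u := by
      have := intervalIntegral.sum_integral_adjacent_intervals
        (a := uu) (n := N) (f := hAvg g) (fun i _ => hint_h _ _)
      rwa [hu0, huN] at this
    rw [← hsplit, hSdef, ← Finset.sum_sub_distrib]
    have hdiff : ∀ j : ℕ, j + 1 ≤ N →
        |(∫ u in uu j..uu (j+1), hAvg g u) - Δ * hAvg g (uu j)| ≤ ε₁ * Δ := by
      intro j hjN
      have hKj := huK j (by omega)
      have hKj1 := huK (j+1) hjN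
      have hconst : Δ * hAvg g (uu j) = ∫ _ in uu j..uu (j+1), hAvg g (uu j) := by
        rw [intervalIntegral.integral_const, hustep j, smul_eq_mul]
        ring_nf
      rw [hconst, ← intervalIntegral.integral_sub (hint_h _ _) intervalIntegrable_const]
      have hptwise : ∀ x ∈ Set.uIoc (uu j) (uu (j+1)),
          ‖hAvg g x - hAvg g (uu j)‖ ≤ ε₁ := by
        intro x hx
        rw [Set.uIoc_of_le (humono j)] at hx
        have hxK : x ∈ Icc a b := ⟨hKj.1.trans hx.1.le, hx.2.trans hKj1.2⟩
        have hxd : |x - uu j| < δ₂ := by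
          rw [abs_of_pos (by linarith [hx.1])]
          have := hx.2
          rw [hustep j] at this
          linarith [hΔδ₂]
        -- |hAvg x - hAvg (uu j)| ≤ ε₁
        have h2π : (0:ℝ) < 2 * π := by positivity
        have hii1 : IntervalIntegrable (fun θ => (g (fBM x * Real.sin θ) : ℝ))
            volume 0 (2*π) := (psi_cont g _).intervalIntegrable _ _
        have hii2 : IntervalIntegrable (fun θ => (g (fBM (uu j) * Real.sin θ) : ℝ))
            volume 0 (2*π) := (psi_cont g _).intervalIntegrable _ _
        have heq : hAvg g x - hAvg g (uu j) = (2*π)⁻¹ *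
            ∫ θ in (0:ℝ)..(2*π), ((g (fBM x * Real.sin θ) : ℝ) -
              g (fBM (uu j) * Real.sin θ)) := by
          rw [intervalIntegral.integral_sub hii1 hii2, hAvg, hAvg]; ring
        rw [Real.norm_eq_abs, heq, abs_mul, abs_inv, abs_of_pos h2π]
        have hb2 : ‖∫ θ in (0:ℝ)..(2*π), ((g (fBM x * Real.sin θ) : ℝ) -
            g (fBM (uu j) * Real.sin θ))‖ ≤ ε₁ * |2*π - 0| :=
          intervalIntegral.norm_integral_le_of_norm_le_const (fun θ _ => by
            simpa [Real.norm_eq_abs] using key x hxK (uu j) hKj hxd θ)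
        rw [Real.norm_eq_abs, sub_zero, abs_of_pos h2π] at hb2
        calc (2*π)⁻¹ * |∫ θ in (0:ℝ)..(2*π), ((g (fBM x * Real.sin θ) : ℝ) -
              g (fBM (uu j) * Real.sin θ))| ≤ (2*π)⁻¹ * (ε₁ * (2*π)) :=
              mul_le_mul_of_nonneg_left hb2 (by positivity)
          _ = ε₁ := by field_simp
      have := intervalIntegral.norm_integral_le_of_norm_le_const hptwise
      rw [Real.norm_eq_abs] at this
      calc |∫ u in uu j..uu (j+1), (hAvg g u - hAvg g (uu j))| ≤ ε₁ * |uu (j+1) - uu j| := this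
        _ = ε₁ * Δ := by rw [hustep j, show uu j + Δ - uu j = Δ by ring, abs_of_nonneg hΔ0]
    calc |∑ j ∈ Finset.range N, ((∫ u in uu j..uu (j+1), hAvg g u) - Δ * hAvg g (uu j))|
        ≤ ∑ j ∈ Finset.range N, |(∫ u in uu j..uu (j+1), hAvg g u) - Δ * hAvg g (uu j)| :=
          Finset.abs_sum_le_sum_abs _ _
      _ ≤ ∑ j ∈ Finset.range N, ε₁ * Δ := Finset.sum_le_sum
          (fun j hj => hdiff j (Finset.mem_range.mp hj))
      _ = N * (ε₁ * Δ) := by rw [Finset.sum_const, Finset.card_range]; simp [nsmul_eq_mul]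
      _ = ε₁ * (b - a) := by rw [hΔdef]; field_simp
      _ ≤ ε₁ * 1 := mul_le_mul_of_nonneg_left hba1 hε₁pos.le
      _ = ε₁ := mul_one _
  -- conclusion
  obtain ⟨N₀, hN₀⟩ := Metric.tendsto_atTop.mp hSn ε₁ hε₁pos
  refine ⟨N₀, fun n hn => ?_⟩
  have hS_n := hN₀ n hn
  rw [Real.dist_eq] at hS_n ⊢
  have t1 := tail (fun u => (g (fBM u * Real.sin (n * u)) : ℝ)) (hint_φ n) (fun x => hgC _)
  have t2 := tail (hAvg g) hint_h hhC
  have b1 := bound1 n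
  set An := ∫ u in (0:ℝ)..1, (g (fBM u * Real.sin (n * u)) : ℝ)
  set Mn := ∫ u in a..b, (g (fBM u * Real.sin (n * u)) : ℝ)
  set Sn := ∑ j ∈ Finset.range N, ∫ u in uu j..uu (j+1),
    (g (fBM (uu j) * Real.sin (n * u)) : ℝ)
  set L := ∫ u in (0:ℝ)..1, hAvg g u
  set M := ∫ u in a..b, hAvg g u
  have tri : |An - L| ≤ |An - Mn| + |Mn - Sn| + |Sn - S| + |S - M| + |M - L| := by
    have h1 := abs_sub_le An Mn L
    have h2 := abs_sub_le Mn Sn L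
    have h3 := abs_sub_le Sn S L
    have h4 := abs_sub_le S M L
    linarith
  have hδC : 2 * C * δ ≤ ε / 8 := by
    calc 2 * C * δ ≤ 2 * C * (ε / (16 * C)) := by
          apply mul_le_mul_of_nonneg_left hδε (by positivity)
      _ = ε / 8 := by field_simp; ring
  have hSM : |S - M| ≤ ε₁ := by rw [abs_sub_comm]; exact bound2
  have hML : |M - L| ≤ 2 * C * δ := by rw [abs_sub_comm]; exact t2
  have h5 : |Sn - S| < ε₁ := hS_n
  have hε₁eq : ε₁ = ε / 8 := hε₁def
  calc |An - L| ≤ |An - Mn| + |Mn - Sn| + |Sn - S| + |S - M| + |M - L| := tri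
    _ < 2*C*δ + ε₁ + ε₁ + ε₁ + 2*C*δ := by linarith [t1, b1, h5, hSM, hML]
    _ ≤ ε/8 + ε/8 + ε/8 + ε/8 + ε/8 := by linarith [hδC, hε₁eq]
    _ < ε := by linarith [hε]

lemma gauss_int : ∫ x : ℝ, Real.exp (-x^2/2) = Real.sqrt (2*π) := by
  have h : ∀ x : ℝ, -x^2/2 = -(2⁻¹) * x^2 := fun x => by ring
  simp_rw [h]
  rw [integral_gaussian]
  rw [show π / 2⁻¹ = 2 * π by ring]

lemma sqrt2pi_pos : (0:ℝ) < Real.sqrt (2*π) := Real.sqrt_pos.mpr (by positivity)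

lemma boxMuller (g : BoundedContinuousFunction ℝ ℝ) :
    ∫ u in Ioo (0:ℝ) 1, hAvg g u
      = ∫ x : ℝ, (g x : ℝ) * ((Real.sqrt (2*π))⁻¹ * Real.exp (-x^2/2)) := by
  have h2π : (0:ℝ) < 2 * π := by positivity
  -- change of variables u = exp (-r^2/2)
  have himg : (fun r : ℝ => Real.exp (-r^2/2)) '' (Ioi 0) = Ioo (0:ℝ) 1 := by
    ext u
    constructor
    · rintro ⟨r, hr, rfl⟩
      refine ⟨Real.exp_pos _, ?_⟩
      rw [show (1:ℝ) = Real.exp 0 by simp]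
      apply Real.exp_lt_exp.mpr
      have : (0:ℝ) < r := hr
      nlinarith
    · rintro ⟨hu0, hu1⟩
      refine ⟨Real.sqrt (-2 * Real.log u), ?_, ?_⟩
      · have hlog : Real.log u < 0 := Real.log_neg hu0 hu1
        exact Real.sqrt_pos.mpr (by linarith)
      · have hlog : Real.log u < 0 := Real.log_neg hu0 hu1
        show Real.exp (-Real.sqrt (-2 * Real.log u) ^ 2 / 2) = u
        rw [show -(Real.sqrt (-2 * Real.log u))^2/2
            = -(-2 * Real.log u)/2 by rw [Real.sq_sqrt (by linarith)]]
        rw [show -(-2 * Real.log u)/2 = Real.log u by ring]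
        exact Real.exp_log hu0
  have hderiv : ∀ r ∈ Ioi (0:ℝ),
      HasDerivWithinAt (fun r : ℝ => Real.exp (-r^2/2))
        (Real.exp (-r^2/2) * (-r)) (Ioi 0) r := by
    intro r _
    have h1 : HasDerivAt (fun r : ℝ => -r^2/2) (-r) r := by
      have h := ((hasDerivAt_pow 2 r).neg.div_const 2)
      exact h.congr_deriv (by norm_num; ring)
    exact (h1.exp).hasDerivWithinAt
  have hinj : InjOn (fun r : ℝ => Real.exp (-r^2/2)) (Ioi 0) := by
    intro x hx y hy hxy
    simp only [Real.exp_eq_exp] at hxy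
    have hx' : (0:ℝ) < x := hx
    have hy' : (0:ℝ) < y := hy
    nlinarith
  have hcov := integral_image_eq_integral_abs_deriv_smul measurableSet_Ioi hderiv hinj (hAvg g)
  rw [himg] at hcov
  -- simplify the integrand on Ioi 0
  have hsimp : ∀ r ∈ Ioi (0:ℝ),
      |Real.exp (-r^2/2) * (-r)| • hAvg g (Real.exp (-r^2/2))
        = r * Real.exp (-r^2/2) * ((2*π)⁻¹ * ∫ θ in (0:ℝ)..(2*π), (g (r * Real.sin θ) : ℝ)) := by
    intro r hr
    have hr' : (0:ℝ) < r := hr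
    have habs : |Real.exp (-r^2/2) * (-r)| = r * Real.exp (-r^2/2) := by
      rw [abs_mul, abs_of_pos (Real.exp_pos _), abs_neg, abs_of_pos hr']
      ring
    have hfBM : fBM (Real.exp (-r^2/2)) = r := by
      rw [fBM]
      simp only [Real.log_exp]
      rw [show -2 * (-r^2/2) = r^2 by ring]
      exact Real.sqrt_sq hr'.le
    rw [habs, smul_eq_mul, hAvg, hfBM]
  rw [setIntegral_congr_fun measurableSet_Ioi hsimp] at hcov
  -- shift the θ-interval from [0, 2π] to [-π, π]
  have hshift : ∀ r : ℝ, (∫ θ in (0:ℝ)..(2*π), (g (r * Real.sin θ) : ℝ))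
      = ∫ θ in Ioo (-π) π, (g (r * Real.sin θ) : ℝ) := by
    intro r
    have := (psi_per g r).intervalIntegral_add_eq (-π) 0
    rw [zero_add] at this
    rw [show -π + 2*π = π by ring] at this
    rw [← this, intervalIntegral.integral_of_le (by linarith [Real.pi_pos]),
      integral_Ioc_eq_integral_Ioo]
  simp_rw [hshift] at hcov
  -- the polar-coordinates identity
  set F : ℝ × ℝ → ℝ := fun p => (2*π)⁻¹ * Real.exp (-(p.1^2 + p.2^2)/2) * g p.2 with hFdef
  have hpolar := integral_comp_polarCoord_symm F
  have htarget : polarCoord.target = Ioi (0:ℝ) ×ˢ Ioo (-π) π := rfl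
  have hGsimp : ∀ p : ℝ × ℝ, p.1 • F (polarCoord.symm p)
      = p.1 * Real.exp (-p.1^2/2) * ((2*π)⁻¹ * g (p.1 * Real.sin p.2)) := by
    intro p
    have hsymm : polarCoord.symm p = (p.1 * Real.cos p.2, p.1 * Real.sin p.2) := rfl
    rw [hsymm, hFdef, smul_eq_mul]
    simp only []
    rw [show (p.1 * Real.cos p.2)^2 + (p.1 * Real.sin p.2)^2 = p.1^2 by
      rw [mul_pow, mul_pow, ← mul_add, Real.cos_sq_add_sin_sq, mul_one]]
    ring
  rw [htarget] at hpolar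
  have hGre : (∫ p in Ioi (0:ℝ) ×ˢ Ioo (-π) π, p.1 • F (polarCoord.symm p))
      = ∫ p in Ioi (0:ℝ) ×ˢ Ioo (-π) π,
          p.1 * Real.exp (-p.1^2/2) * ((2*π)⁻¹ * g (p.1 * Real.sin p.2)) := by
    apply MeasureTheory.integral_congr_ae
    filter_upwards with p
    rw [hGsimp p]
  rw [hGre] at hpolar
  -- Fubini on the product set
  have hprodmeas : (volume : Measure (ℝ × ℝ)).restrict (Ioi (0:ℝ) ×ˢ Ioo (-π) π)
      = (volume.restrict (Ioi (0:ℝ))).prod (volume.restrict (Ioo (-π) π)) := by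
    rw [Measure.volume_eq_prod, Measure.prod_restrict]
  have hintG : Integrable (fun p : ℝ × ℝ =>
      p.1 * Real.exp (-p.1^2/2) * ((2*π)⁻¹ * g (p.1 * Real.sin p.2)))
      ((volume.restrict (Ioi (0:ℝ))).prod (volume.restrict (Ioo (-π) π))) := by
    have hmaj : Integrable (fun p : ℝ × ℝ => (|p.1| * Real.exp (-p.1^2/2)) * ((2*π)⁻¹ * ‖g‖))
        ((volume.restrict (Ioi (0:ℝ))).prod (volume.restrict (Ioo (-π) π))) := by
      apply MeasureTheory.Integrable.mul_prod (f := fun x : ℝ => |x| * Real.exp (-x^2/2))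
        (g := fun _ : ℝ => (2*π)⁻¹ * ‖g‖)
      · have h0 : Integrable (fun x : ℝ => x * Real.exp (-(2⁻¹) * x^2)) volume :=
          integrable_mul_exp_neg_mul_sq (by norm_num)
        have h1 : Integrable (fun x : ℝ => |x * Real.exp (-(2⁻¹) * x^2)|) volume := h0.abs
        have h2 : (fun x : ℝ => |x * Real.exp (-(2⁻¹) * x^2)|)
            = fun x : ℝ => |x| * Real.exp (-x^2/2) := by
          funext x
          rw [abs_mul, abs_of_pos (Real.exp_pos _)]
          congr 2
          ring
        rw [h2] at h1
        exact h1.restrict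
      · apply integrable_const
    apply hmaj.mono'
    · apply Measurable.aestronglyMeasurable
      apply Measurable.mul
      · exact (measurable_fst.mul
          ((Real.measurable_exp.comp ((measurable_fst.pow_const 2).neg.div_const 2))))
      · exact measurable_const.mul (g.continuous.measurable.comp
          (measurable_fst.mul (Real.measurable_sin.comp measurable_snd)))
    · filter_upwards with p
      rw [Real.norm_eq_abs, abs_mul, abs_mul, abs_mul, abs_of_pos (Real.exp_pos _),
        abs_of_pos (by positivity : (0:ℝ) < (2*π)⁻¹)]
      gcongr
      exact g_bdd g _
  have hfub := MeasureTheory.integral_prod _ hintG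
  rw [hprodmeas, hfub] at hpolar
  -- identify the iterated integral with our integral
  have hinner : ∀ r : ℝ, (∫ θ in Ioo (-π) π,
      r * Real.exp (-r^2/2) * ((2*π)⁻¹ * g (r * Real.sin θ)))
      = r * Real.exp (-r^2/2) * ((2*π)⁻¹ * ∫ θ in Ioo (-π) π, (g (r * Real.sin θ) : ℝ)) := by
    intro r
    rw [show r * Real.exp (-r^2/2) * ((2*π)⁻¹ * ∫ θ in Ioo (-π) π, (g (r * Real.sin θ) : ℝ))
        = (r * Real.exp (-r^2/2) * (2*π)⁻¹) * ∫ θ in Ioo (-π) π, (g (r * Real.sin θ) : ℝ)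
      by ring, ← MeasureTheory.integral_const_mul]
    apply MeasureTheory.integral_congr_ae
    filter_upwards with θ
    ring
  simp_rw [hinner] at hpolar
  -- compute the RHS of the polar identity
  have hF : ∫ p : ℝ × ℝ, F p
      = (∫ x : ℝ, (2*π)⁻¹ * Real.exp (-x^2/2)) * ∫ y : ℝ, Real.exp (-y^2/2) * g y := by
    rw [Measure.volume_eq_prod]
    rw [show F = fun p : ℝ × ℝ => ((2*π)⁻¹ * Real.exp (-p.1^2/2)) * (Real.exp (-p.2^2/2) * g p.2)
      from funext fun p => by
        rw [hFdef]
        simp only []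
        rw [show -(p.1^2 + p.2^2)/2 = -p.1^2/2 + -p.2^2/2 by ring, Real.exp_add]
        ring]
    exact MeasureTheory.integral_prod_mul (μ := volume) (ν := volume)
      (fun x : ℝ => (2*π)⁻¹ * Real.exp (-x^2/2)) (fun y : ℝ => Real.exp (-y^2/2) * g y)
  have hgauss : (∫ x : ℝ, (2*π)⁻¹ * Real.exp (-x^2/2)) = (Real.sqrt (2*π))⁻¹ := by
    rw [show (∫ x : ℝ, (2*π)⁻¹ * Real.exp (-x^2/2))
        = (2*π)⁻¹ * ∫ x : ℝ, Real.exp (-x^2/2) from MeasureTheory.integral_const_mul _ _,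
      gauss_int]
    rw [show (2*π) = Real.sqrt (2*π) * Real.sqrt (2*π) from
      (Real.mul_self_sqrt (by positivity)).symm]
    field_simp
    rw [Real.sqrt_sq sqrt2pi_pos.le]
  rw [hF, hgauss] at hpolar
  rw [hcov, hpolar]
  rw [show (Real.sqrt (2*π))⁻¹ * ∫ y : ℝ, Real.exp (-y^2/2) * g y
      = ∫ y : ℝ, (Real.sqrt (2*π))⁻¹ * (Real.exp (-y^2/2) * g y)
    from (MeasureTheory.integral_const_mul _ _).symm]
  congr 1
  funext y
  ring


/-- The laws of `V_n = √(−2 ln U) sin(n U)` converge weakly to the standard normal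
distribution, i.e. the measure with density `t ↦ (1/√(2π)) e^{−t²/2}`. -/
theorem tendsto_law_gaussian :
    IsProbabilityMeasure
      (volume.withDensity
        (fun t : ℝ => ENNReal.ofReal ((Real.sqrt (2 * Real.pi))⁻¹ * Real.exp (-t ^ 2 / 2)))) ∧
    ∀ g : BoundedContinuousFunction ℝ ℝ,
      Filter.Tendsto
        (fun n : ℕ =>
          ∫ x : ℝ, g x
            ∂(uniform01.map (fun u => Real.sqrt (-2 * Real.log u) * Real.sin (n * u))))
        Filter.atTop
        (nhds (∫ x : ℝ, g x
          ∂(volume.withDensity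
            (fun t : ℝ =>
              ENNReal.ofReal ((Real.sqrt (2 * Real.pi))⁻¹ * Real.exp (-t ^ 2 / 2)))))) := by
  have hdens_eq : (volume.withDensity
      (fun t : ℝ => ENNReal.ofReal ((Real.sqrt (2 * Real.pi))⁻¹ * Real.exp (-t ^ 2 / 2))))
      = ProbabilityTheory.gaussianReal 0 1 := by
    rw [ProbabilityTheory.gaussianReal_of_var_ne_zero _ one_ne_zero]
    congr 1
    funext t
    rw [ProbabilityTheory.gaussianPDF]
    congr 1
    simp only [ProbabilityTheory.gaussianPDFReal, NNReal.coe_one, mul_one, sub_zero]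
  constructor
  · rw [hdens_eq]
    infer_instance
  · intro g
    have hVmeas : ∀ n : ℕ, Measurable fun u : ℝ =>
        Real.sqrt (-2 * Real.log u) * Real.sin ((n:ℝ) * u) := by
      intro n
      exact ((measurable_const.mul Real.measurable_log).sqrt).mul
        (Real.measurable_sin.comp (measurable_const.mul measurable_id))
    have hmap : ∀ n : ℕ, (∫ x : ℝ, (g x : ℝ)
        ∂(uniform01.map (fun u => Real.sqrt (-2 * Real.log u) * Real.sin ((n:ℝ) * u))))
        = ∫ u in (0:ℝ)..1, (g (fBM u * Real.sin ((n:ℝ) * u)) : ℝ) := by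
      intro n
      rw [uniform01, MeasureTheory.integral_map (hVmeas n).aemeasurable
        g.continuous.aestronglyMeasurable]
      rw [intervalIntegral.integral_of_le zero_le_one, integral_Ioc_eq_integral_Ioo]
      rfl
    have hwd : (∫ x : ℝ, (g x : ℝ) ∂(volume.withDensity
        (fun t : ℝ => ENNReal.ofReal ((Real.sqrt (2 * Real.pi))⁻¹ * Real.exp (-t ^ 2 / 2)))))
        = ∫ u in (0:ℝ)..1, hAvg g u := by
      have hd_cont : Continuous fun t : ℝ => (Real.sqrt (2 * π))⁻¹ * Real.exp (-t ^ 2 / 2) :=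
        continuous_const.mul (Real.continuous_exp.comp (by fun_prop))
      have hd_nonneg : ∀ t : ℝ, 0 ≤ (Real.sqrt (2 * π))⁻¹ * Real.exp (-t ^ 2 / 2) :=
        fun t => by positivity
      have heq : (fun t : ℝ => ENNReal.ofReal ((Real.sqrt (2 * Real.pi))⁻¹
          * Real.exp (-t ^ 2 / 2)))
          = fun t : ℝ => ((((Real.sqrt (2 * π))⁻¹ * Real.exp (-t ^ 2 / 2)).toNNReal : ℝ≥0)
            : ℝ≥0∞) := rfl
      rw [heq, integral_withDensity_eq_integral_smul
        (hd_cont.measurable.real_toNNReal) (fun x : ℝ => (g x : ℝ))]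
      have h1 : (∫ x : ℝ, (((Real.sqrt (2 * π))⁻¹ * Real.exp (-x ^ 2 / 2)).toNNReal : ℝ≥0)
          • (g x : ℝ)) = ∫ x : ℝ, (g x : ℝ) * ((Real.sqrt (2 * π))⁻¹ * Real.exp (-x ^ 2 / 2)) := by
        congr 1
        funext x
        rw [NNReal.smul_def, Real.coe_toNNReal _ (hd_nonneg x), smul_eq_mul]
        ring
      rw [h1, ← boxMuller g, intervalIntegral.integral_of_le zero_le_one,
        integral_Ioc_eq_integral_Ioo]
    have hfun : (fun n : ℕ => ∫ x : ℝ, (g x : ℝ)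
        ∂(uniform01.map (fun u => Real.sqrt (-2 * Real.log u) * Real.sin ((n:ℝ) * u))))
        = fun n : ℕ => ∫ u in (0:ℝ)..1, (g (fBM u * Real.sin ((n:ℝ) * u)) : ℝ) :=
      funext fun n => hmap n
    rw [hfun, hwd]
    exact stepB g
end
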